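/- arXiv:1711.02729 — 3 statements merged into one kernel-verified Lean document; each statement's English description precedes it below -/
import Mathlib

section
/- Let d ≥ 1, let f = (0, f_0, …, f_{d−1}) be a vector of nonnegative integers, and let n ≥ 1. Define sequences (a_0,…,a_{d−1}) and (b_0,…,b_{d−1}) by a_{d−1} := f_{d−1}, b_{d−1} := 0, and for k = d−1, d−2, …, 1: a_{k−1} := max(∂_{k+1}(a_k), f_{k−1} + ∂_{k+1}(b_k)) and b_{k−1} := max(∂_{k+1}(b_k), ∂_{k+1}(a_k) − f_{k−1}) (subtraction taken in ℤ; the maxima are nonnegative). Then there exists a proper relative simplicial complex Ψ on ground set [n] with f_k(Ψ) = f_k for 0 ≤ k ≤ d−1 and f_k(Ψ) = 0 for all other k, if and only if a_0 ≤ n. -/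
open Finset

/-- `IsCascadeRep k r t c` says that `r = ∑_{i=t}^{k} C(c i, i)` is the `k`-th binomial
(cascade/Macaulay) representation of `r`, i.e. `c k > c (k-1) > ⋯ > c t ≥ t ≥ 1`. -/
def IsCascadeRep (k r t : ℕ) (c : ℕ → ℕ) : Prop :=
  1 ≤ t ∧ t ≤ k ∧ (∀ i, t ≤ i → i < k → c i < c (i + 1)) ∧ t ≤ c t ∧
    r = ∑ i ∈ Finset.Icc t k, (c i).choose i

/-- The value `∑_{i=t}^{k} g (c i) i` computed from the (unique) `k`-th cascade
representation of `r`; by convention `0` if no representation exists (e.g. `r = 0`). -/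
noncomputable def cascadeVal (g : ℕ → ℕ → ℕ) (k r : ℕ) : ℕ :=
  sInf {s | ∃ t c, IsCascadeRep k r t c ∧ s = ∑ i ∈ Finset.Icc t k, g (c i) i}

/-- `∂_k(r) = C(r_k, k-1) + ⋯ + C(r_t, t-1)`, with `∂_k(0) = 0`. -/
noncomputable def partialShadow (k r : ℕ) : ℕ :=
  cascadeVal (fun m i => m.choose (i - 1)) k r

/-- `∂̃_k(r) = C(r_k - 1, k-1) + ⋯ + C(r_t - 1, t-1)`, with `∂̃_k(0) = 0`. -/
noncomputable def partialShadowTilde (k r : ℕ) : ℕ :=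
  cascadeVal (fun m i => (m - 1).choose (i - 1)) k r

/-- `r^⟨k⟩ = C(r_k + 1, k+1) + ⋯ + C(r_t + 1, t+1)`, with `0^⟨k⟩ = 0`. -/
noncomputable def upperShadow (k r : ℕ) : ℕ :=
  cascadeVal (fun m i => (m + 1).choose (i + 1)) k r

/-- A simplicial complex on the ground set `[n] = {1,…,n}`:
a collection of subsets of `[n]` closed under taking subsets. -/
def SimplicialOn (n : ℕ) (Δ : Set (Finset ℕ)) : Prop :=
  (∀ σ ∈ Δ, σ ⊆ Finset.Icc 1 n) ∧ ∀ σ ∈ Δ, ∀ τ, τ ⊆ σ → τ ∈ Δ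

/-- The number of faces of `Δ` of cardinality `c` (so `faceCount Δ (k+1) = f_k(Δ)`). -/
noncomputable def faceCount (Δ : Set (Finset ℕ)) (c : ℕ) : ℕ :=
  Set.ncard {σ ∈ Δ | σ.card = c}

/-- The number of faces of the relative complex `Δ \ Γ` of cardinality `c`. -/
noncomputable def relFaceCount (Δ Γ : Set (Finset ℕ)) (c : ℕ) : ℕ :=
  Set.ncard {σ | σ ∈ Δ ∧ σ ∉ Γ ∧ σ.card = c}

/-- `Δ` is compressed on ground set `[n]`: for each cardinality, its faces of that
cardinality form an initial segment of the reverse lexicographic (colex) order. -/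
def IsCompressed (n : ℕ) (Δ : Set (Finset ℕ)) : Prop :=
  ∀ σ τ : Finset ℕ, σ ⊆ Finset.Icc 1 n → τ ∈ Δ → σ.card = τ.card →
    toColex σ ≤ toColex τ → σ ∈ Δ

/-- A multicomplex on `[n]`: a collection of finite multisets with elements in `[n]`,
closed under taking multisubsets. -/
def MulticomplexOn (n : ℕ) (Δ : Set (Multiset ℕ)) : Prop :=
  (∀ F ∈ Δ, ∀ x ∈ F, x ∈ Finset.Icc 1 n) ∧ ∀ F ∈ Δ, ∀ G, G ≤ F → G ∈ Δ

/-- The number of multisets in `Δ` of cardinality `c`. -/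
noncomputable def mFaceCount (Δ : Set (Multiset ℕ)) (c : ℕ) : ℕ :=
  Set.ncard {F ∈ Δ | Multiset.card F = c}

/-- Strict reverse lexicographic comparison of multisets (intended for multisets of
equal cardinality): writing each as a weakly increasing sequence, `F < G` iff at the
largest position where they differ, `F` has the smaller entry. -/
def MRevLexLT (F G : Multiset ℕ) : Prop :=
  List.Lex (· < ·) (Multiset.sort F (· ≤ ·)).reverse (Multiset.sort G (· ≤ ·)).reverse

/-- A compressed multicomplex on `[n]`: each cardinality layer is an initial segment of
the reverse lexicographic order on multisets of that cardinality with entries in `[n]`. -/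
def IsCompressedMulti (n : ℕ) (Δ : Set (Multiset ℕ)) : Prop :=
  ∀ F G : Multiset ℕ, (∀ x ∈ F, x ∈ Finset.Icc 1 n) → G ∈ Δ →
    Multiset.card F = Multiset.card G → (F = G ∨ MRevLexLT F G) → F ∈ Δ

/-- `Ψ_{j+1} \ Ψ_j` for the relative complex `Δ \ Γ` and the list `L` of facets:
the faces of `Δ \ Γ` contained in the `j`-th facet but in no earlier one. -/
def shellStep (Δ Γ : Set (Finset ℕ)) (L : List (Finset ℕ)) (j : ℕ) : Set (Finset ℕ) :=
  {τ | τ ∈ Δ ∧ τ ∉ Γ ∧ τ ⊆ L.getD j ∅ ∧ ∀ i < j, ¬ τ ⊆ L.getD i ∅}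

/-- `L` is a shelling order of the relative simplicial complex `Δ \ Γ`:
it enumerates the inclusion-maximal faces of `Δ \ Γ` without repetition, and at every
step the newly added faces have a unique inclusion-minimal element (equivalently, a
minimum, as the family is finite). -/
def IsShelling (Δ Γ : Set (Finset ℕ)) (L : List (Finset ℕ)) : Prop :=
  L.Nodup ∧
  (∀ σ : Finset ℕ,
    (σ ∈ Δ ∧ σ ∉ Γ ∧ ∀ τ, τ ∈ Δ → τ ∉ Γ → σ ⊆ τ → σ = τ) ↔ σ ∈ L) ∧
  ∀ j < L.length, ∃ R, R ∈ shellStep Δ Γ L j ∧ ∀ τ ∈ shellStep Δ Γ L j, R ⊆ τ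

/-- The map `Φ_d` sending a multiset `F = {b_1 ≤ … ≤ b_k}` (with `k ≤ d`) to the
`d`-set `{1,…,d−k} ∪ {b_1 + d−k+1, …, b_k + d}`. -/
def PhiBFS (d : ℕ) (F : Multiset ℕ) : Finset ℕ :=
  Finset.Icc 1 (d - Multiset.card F) ∪
    (Finset.univ : Finset (Fin (Multiset.card F))).image
      (fun i : Fin (Multiset.card F) =>
        (Multiset.sort F (· ≤ ·)).getD (i : ℕ) 0 + (d - Multiset.card F) + 1 + (i : ℕ))

namespace KKWork

lemma lt_choose_add {k : ℕ} (hk : 1 ≤ k) (r : ℕ) : r < (k + r).choose k := by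
  induction k with
  | zero => omega
  | succ k ih =>
    rcases Nat.eq_zero_or_pos k with rfl | hk'
    · simp
    · have h1 := ih hk'
      have h2 : (k + r).choose k ≤ (k + 1 + r).choose (k + 1) := by
        have he : (k + 1 + r) = (k + r) + 1 := by omega
        rw [he, Nat.choose_succ_succ']
        omega
      omega

lemma choose_succ_lt {k p : ℕ} (hk : 1 ≤ k) (hp : k ≤ p) :
    p.choose k < (p + 1).choose k := by
  obtain ⟨k', rfl⟩ : ∃ k', k = k' + 1 := ⟨k - 1, by omega⟩
  rw [Nat.choose_succ_succ' p k']
  have h1 : 0 < p.choose k' := Nat.choose_pos (by omega)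
  omega

lemma choose_strict_mono {k m n : ℕ} (hk : 1 ≤ k) (hkm : k ≤ m) (hmn : m < n) :
    m.choose k < n.choose k := by
  have key : ∀ d, m.choose k < (m + 1 + d).choose k := by
    intro d
    induction d with
    | zero => simpa using choose_succ_lt hk hkm
    | succ d ih =>
      have h2 : (m + 1 + d).choose k ≤ (m + 1 + (d+1)).choose k :=
        Nat.choose_le_choose _ (by omega)
      omega
  have he : n = m + 1 + (n - m - 1) := by omega
  rw [he]
  exact key _

lemma le_of_choose_le {k m n : ℕ} (hk : 1 ≤ k) (hkm : k ≤ m)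
    (h : m.choose k ≤ n.choose k) : m ≤ n := by
  by_contra hc
  push_neg at hc
  rcases le_or_gt k n with hkn | hkn
  · exact absurd h (not_le.2 (choose_strict_mono hk hkn hc))
  · have h0 : n.choose k = 0 := Nat.choose_eq_zero_of_lt hkn
    have h1 : 0 < m.choose k := Nat.choose_pos hkm
    omega

lemma cascade_exists_aux : ∀ k, 1 ≤ k → ∀ r, 1 ≤ r →
    ∃ t c, IsCascadeRep k r t c ∧ r < (c k + 1).choose k := by
  intro k
  induction k with
  | zero => omega
  | succ k ih =>
    intro _ r hr
    classical
    set m := Nat.findGreatest (fun x => x.choose (k+1) ≤ r) (k + 1 + r) with hm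
    have hPm : m.choose (k+1) ≤ r := by
      refine Nat.findGreatest_spec (P := fun x => x.choose (k+1) ≤ r) (n := k + 1 + r) (m := k+1) (by omega) ?_
      simpa using hr
    have hkm : k + 1 ≤ m := Nat.le_findGreatest (P := fun x => x.choose (k+1) ≤ r) (n := k + 1 + r) (by omega) (by simpa using hr)
    have hbound : r < (m + 1).choose (k+1) := by
      rcases le_or_gt (m + 1) (k + 1 + r) with hle | hgt
      · have h2 := Nat.findGreatest_is_greatest (Nat.lt_succ_self m) hle
        simp only [not_le] at h2
        exact h2
      · have h1 : r < (k + 1 + r).choose (k+1) := lt_choose_add (by omega) r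
        have h2 : (k + 1 + r).choose (k+1) ≤ (m+1).choose (k+1) :=
          Nat.choose_le_choose _ (by omega)
        omega
    rcases Nat.eq_zero_or_pos (r - m.choose (k+1)) with h0 | h1
    · have hreq : r = m.choose (k+1) := by omega
      refine ⟨k+1, fun _ => m, ⟨by omega, le_refl _, by omega, hkm, ?_⟩, by simpa using hbound⟩
      simp [hreq]
    · rcases Nat.eq_zero_or_pos k with hk0 | hk'
      · subst hk0
        exact ⟨1, fun _ => r, ⟨le_refl _, le_refl _, by omega, hr, by simp⟩, by simp⟩
      · obtain ⟨t, c', ⟨ht1, htk, hmono, hct, hsum⟩, hb'⟩ := ih hk' (r - m.choose (k+1)) h1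
        have hck : c' k < m := by
          by_contra hc
          push_neg at hc
          have h2 : (c' k).choose k ≤ r - m.choose (k+1) := by
            rw [hsum]
            exact Finset.single_le_sum (f := fun i => (c' i).choose i)
              (fun i _ => Nat.zero_le _) (by simp [Finset.mem_Icc]; omega)
          have h3 : m.choose k ≤ (c' k).choose k := Nat.choose_le_choose _ hc
          have h4 : (m+1).choose (k+1) = m.choose k + m.choose (k+1) :=
            Nat.choose_succ_succ' m k
          omega
        refine ⟨t, fun i => if i = k + 1 then m else c' i, ⟨ht1, by omega, ?_, ?_, ?_⟩, ?_⟩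
        · intro i hti hik
          beta_reduce
          rcases Nat.lt_or_ge i k with h | h
          · rw [if_neg (by omega : ¬ i = k+1), if_neg (by omega : ¬ i + 1 = k+1)]
            exact hmono i hti h
          · have hik' : i = k := by omega
            subst hik'
            beta_reduce
            rw [if_neg (by omega : ¬ i = i+1), if_pos rfl]
            exact hck
        · beta_reduce
          rw [if_neg (by omega : ¬ t = k+1)]; exact hct
        · beta_reduce
          rw [Finset.sum_Icc_succ_top (by omega : t ≤ k + 1), if_pos rfl]
          have he : ∑ i ∈ Finset.Icc t k, (if i = k + 1 then m else c' i).choose i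
              = ∑ i ∈ Finset.Icc t k, (c' i).choose i := by
            refine Finset.sum_congr rfl fun i hi => ?_
            rw [Finset.mem_Icc] at hi
            rw [if_neg (by omega)]
          rw [he, ← hsum]
          omega
        · beta_reduce
          rw [if_pos rfl]; exact hbound

lemma cascade_exists {k r : ℕ} (hk : 1 ≤ k) (hr : 1 ≤ r) :
    ∃ t c, IsCascadeRep k r t c := by
  obtain ⟨t, c, h, _⟩ := cascade_exists_aux k hk r hr
  exact ⟨t, c, h⟩

lemma no_rep_zero {k : ℕ} : ¬ ∃ t c, IsCascadeRep k 0 t c := by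
  rintro ⟨t, c, ht1, htk, hmono, hct, hsum⟩
  have h1 : (c t).choose t ≤ 0 := by
    rw [hsum]
    exact Finset.single_le_sum (f := fun i => (c i).choose i)
      (fun i _ => Nat.zero_le _) (by simp [Finset.mem_Icc]; omega)
  have := Nat.choose_pos hct
  omega

end KKWork

namespace KKWork

def Good (c : ℕ → ℕ) (t k : ℕ) : Prop :=
  1 ≤ t ∧ t ≤ k ∧ (∀ i, t ≤ i → i < k → c i < c (i + 1)) ∧ t ≤ c t

lemma _root_.IsCascadeRep.good {k r t : ℕ} {c : ℕ → ℕ} (h : IsCascadeRep k r t c) : KKWork.Good c t k :=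
  ⟨h.1, h.2.1, h.2.2.1, h.2.2.2.1⟩

namespace Good

variable {c : ℕ → ℕ} {t k : ℕ}

lemma mono' (h : Good c t k) : ∀ i j, t ≤ i → i < j → j ≤ k → c i < c j := by
  obtain ⟨ht, htk, hm, hct⟩ := h
  intro i j hti hij hjk
  have key : ∀ d, i + 1 + d ≤ k → c i < c (i + 1 + d) := by
    intro d
    induction d with
    | zero => intro hd; simpa using hm i hti (by omega)
    | succ d ih =>
      intro hd
      have h1 : c i < c (i + 1 + d) := ih (by omega)
      have h2 : c (i + 1 + d) < c (i + 1 + d + 1) := hm _ (by omega) (by omega)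
      have he : i + 1 + (d + 1) = i + 1 + d + 1 := by omega
      rw [he]; omega
  have he : j = i + 1 + (j - i - 1) := by omega
  rw [he]; exact key _ (by omega)

lemma mono (h : Good c t k) : ∀ i j, t ≤ i → i ≤ j → j ≤ k → c i ≤ c j := by
  intro i j hti hij hjk
  rcases eq_or_lt_of_le hij with rfl | hlt
  · exact le_refl _
  · exact (h.mono' i j hti hlt hjk).le

lemma self_le (h : Good c t k) : ∀ i, t ≤ i → i ≤ k → i ≤ c i := by
  intro i hti hik
  have key : ∀ d, t + d ≤ k → t + d ≤ c (t + d) := by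
    intro d
    induction d with
    | zero => intro _; simpa using h.2.2.2
    | succ d ih =>
      intro hd
      have h1 := ih (by omega)
      have h2 := h.2.2.1 (t + d) (by omega) (by omega)
      have he : t + (d + 1) = t + d + 1 := by omega
      rw [he]; omega
  have he : i = t + (i - t) := by omega
  rw [he]; exact key _ (by omega)

lemma restrict (h : Good c t k) {k' : ℕ} (h2 : t ≤ k') (h3 : k' ≤ k) : Good c t k' :=
  ⟨h.1, h2, fun i hti hik => h.2.2.1 i hti (by omega), h.2.2.2⟩

end Good

def tailF (c : ℕ → ℕ) (k i : ℕ) : Finset ℕ := (Finset.Ioc i k).image c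

def segFam (c : ℕ → ℕ) (t k e : ℕ) : Finset (Finset ℕ) :=
  (Finset.Icc t k).biUnion fun i =>
    (Finset.powersetCard (i - e) (Finset.range (c i))).image fun τ => τ ∪ tailF c k i

variable {c : ℕ → ℕ} {t k e i : ℕ}

lemma mem_tailF {x : ℕ} : x ∈ tailF c k i ↔ ∃ j, i < j ∧ j ≤ k ∧ c j = x := by
  simp [tailF, Finset.mem_image, Finset.mem_Ioc, and_assoc]

lemma mem_segFam {σ : Finset ℕ} : σ ∈ segFam c t k e ↔
    ∃ i, t ≤ i ∧ i ≤ k ∧ ∃ τ, τ ⊆ Finset.range (c i) ∧ τ.card = i - e ∧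
      σ = τ ∪ tailF c k i := by
  simp only [segFam, Finset.mem_biUnion, Finset.mem_image, Finset.mem_powersetCard,
    Finset.mem_Icc]
  constructor
  · rintro ⟨i, ⟨h1, h2⟩, τ, ⟨hτ1, hτ2⟩, h3⟩
    exact ⟨i, h1, h2, τ, hτ1, hτ2, h3.symm⟩
  · rintro ⟨i, h1, h2, τ, hτ1, hτ2, h3⟩
    exact ⟨i, ⟨h1, h2⟩, τ, ⟨hτ1, hτ2⟩, h3.symm⟩

lemma tailF_lt (h : Good c t k) (hti : t ≤ i) : ∀ x ∈ tailF c k i, c i < x := by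
  intro x hx
  obtain ⟨j, hij, hjk, rfl⟩ := mem_tailF.1 hx
  exact h.mono' i j hti hij hjk

lemma tailF_card (h : Good c t k) (hti : t ≤ i) : (tailF c k i).card = k - i := by
  rw [tailF, Finset.card_image_of_injOn, Nat.card_Ioc]
  intro x hx y hy hxy
  simp only [Finset.coe_Ioc, Set.mem_Ioc] at hx hy
  by_contra hne
  rcases Nat.lt_or_ge x y with hl | hl
  · exact absurd hxy (Nat.ne_of_lt (h.mono' x y (by omega) hl hy.2))
  · have hl' : y < x := by omega
    exact absurd hxy.symm (Nat.ne_of_lt (h.mono' y x (by omega) hl' hx.2))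

lemma tailF_disj (h : Good c t k) (hti : t ≤ i) {τ : Finset ℕ}
    (hτ : τ ⊆ Finset.range (c i)) : Disjoint τ (tailF c k i) := by
  rw [Finset.disjoint_left]
  intro x hxτ hxt
  have h1 := hτ hxτ
  rw [Finset.mem_range] at h1
  exact absurd h1 (not_lt.2 (tailF_lt h hti x hxt).le)

lemma card_mem_segFam (h : Good c t k) (he : e ≤ 1) {σ : Finset ℕ}
    (hσ : σ ∈ segFam c t k e) : σ.card = k - e := by
  obtain ⟨i, hti, hik, τ, hτ, hcard, rfl⟩ := mem_segFam.1 hσ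
  rw [Finset.card_union_of_disjoint (tailF_disj h hti hτ), hcard, tailF_card h hti]
  have := h.1
  omega

lemma card_segFam (h : Good c t k) (he : e ≤ 1) :
    (segFam c t k e).card = ∑ i ∈ Finset.Icc t k, (c i).choose (i - e) := by
  rw [segFam, Finset.card_biUnion]
  · refine Finset.sum_congr rfl fun i hi => ?_
    rw [Finset.mem_Icc] at hi
    rw [Finset.card_image_of_injOn, Finset.card_powersetCard, Finset.card_range]
    intro τ hτ τ' hτ' hee
    simp only [Finset.mem_coe, Finset.mem_powersetCard] at hτ hτ'
    replace hee : τ ∪ tailF c k i = τ' ∪ tailF c k i := hee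
    have d1 := tailF_disj h hi.1 hτ.1
    have d2 := tailF_disj h hi.1 hτ'.1
    have : (τ ∪ tailF c k i) \ tailF c k i = (τ' ∪ tailF c k i) \ tailF c k i := by
      rw [hee]
    rwa [Finset.union_sdiff_cancel_right d1, Finset.union_sdiff_cancel_right d2] at this
  · have key : ∀ x y, t ≤ x → x < y → y ≤ k → Disjoint
        (image (fun τ => τ ∪ tailF c k x) (powersetCard (x - e) (range (c x))))
        (image (fun τ => τ ∪ tailF c k y) (powersetCard (y - e) (range (c y)))) := by
      intro x y hx' hlt hy'
      have hx : t ≤ x ∧ x ≤ k := ⟨hx', by omega⟩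
      have hy : t ≤ y ∧ y ≤ k := ⟨by omega, hy'⟩
      rw [Finset.disjoint_left]
      rintro σ hσx hσy
      simp only [Finset.mem_image, Finset.mem_powersetCard] at hσx hσy
      obtain ⟨τ, ⟨hτ1, hτ2⟩, rfl⟩ := hσx
      obtain ⟨τ', ⟨hτ1', hτ2'⟩, heq⟩ := hσy
      have hcy : c y ∈ τ ∪ tailF c k x := by
        rw [Finset.mem_union]
        exact Or.inr (mem_tailF.2 ⟨y, hlt, hy.2, rfl⟩)
      rw [← heq] at hcy
      rw [Finset.mem_union] at hcy
      rcases hcy with hcy | hcy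
      · have := hτ1' hcy
        rw [Finset.mem_range] at this
        omega
      · obtain ⟨j, hyj, hjk, hcj⟩ := mem_tailF.1 hcy
        exact absurd hcj (Nat.ne_of_gt (h.mono' y j hy.1 hyj hjk))
    intro x hx y hy hxy
    simp only [Finset.mem_coe, Finset.coe_Icc, Set.mem_Icc, Finset.mem_Icc] at hx hy
    rcases Nat.lt_or_ge x y with hlt | hge
    · exact key x y hx.1 hlt hy.2
    · have hlt : y < x := by omega
      exact (key y x hy.1 hlt hx.2).symm

end KKWork

namespace KKWork
open Finset.Colex

variable {c : ℕ → ℕ} {t k e i : ℕ}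

lemma tailF_succ (hik : i ≤ k) : tailF c (k+1) i = insert (c (k+1)) (tailF c k i) := by
  rw [tailF, tailF, show Finset.Ioc i (k+1) = insert (k+1) (Finset.Ioc i k) by
    ext j; simp only [Finset.mem_Ioc, Finset.mem_insert]; omega, Finset.image_insert]

lemma top_notMem_tailF (hg : Good c t (k+1)) (hti : t ≤ i) :
    c (k+1) ∉ tailF c k i := by
  intro hmem
  obtain ⟨j, hij, hjk, hcj⟩ := mem_tailF.1 hmem
  exact absurd hcj (Nat.ne_of_lt (hg.mono' j (k+1) (by omega) (by omega) (le_refl _)))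

lemma top_notMem_tau (hg : Good c t (k+1)) (hti : t ≤ i) (hik : i ≤ k+1)
    {τ : Finset ℕ} (hτ : τ ⊆ Finset.range (c i)) : c (k+1) ∉ τ := by
  intro hmem
  have h1 := hτ hmem
  rw [Finset.mem_range] at h1
  have h2 : c i ≤ c (k+1) := hg.mono i (k+1) hti hik (le_refl _)
  omega

lemma segFam_initseg (c : ℕ → ℕ) :
    ∀ k t e, Good c t k → e ≤ 1 →
      ∀ ρ σ : Finset ℕ, σ ∈ segFam c t k e → ρ.card = k - e →
        toColex ρ ≤ toColex σ → ρ ∈ segFam c t k e := by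
  intro k
  induction k with
  | zero => intro t e hg; exact absurd hg.2.1 (by have := hg.1; omega)
  | succ k ih =>
    intro t e hg he ρ σ hσ hρcard hle
    obtain ⟨i, hti, hik, τ, hτsub, hτcard, rfl⟩ := mem_segFam.1 hσ
    rcases Nat.eq_or_lt_of_le hik with hieq | hilt
    · -- i = k + 1 : the tail is empty
      subst hieq
      have htail : tailF c (k+1) (k+1) = ∅ := by simp [tailF]
      have hall : ∀ b ∈ τ ∪ tailF c (k+1) (k+1), b < c (k+1) := by
        intro b hb
        rw [htail, Finset.union_empty] at hb
        simpa using hτsub hb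
      have hρall := forall_lt_mono hle hall
      refine mem_segFam.2 ⟨k+1, hti, le_refl _, ρ, ?_, hρcard,
        by rw [htail, Finset.union_empty]⟩
      intro b hb
      rw [Finset.mem_range]
      exact hρall b hb
    · have hik' : i ≤ k := by omega
      by_cases hxρ : c (k+1) ∈ ρ
      · -- erase the common top element and use the induction hypothesis
        have hxσ : c (k+1) ∈ τ ∪ tailF c (k+1) i := by
          rw [Finset.mem_union, mem_tailF]
          exact Or.inr ⟨k+1, by omega, le_refl _, rfl⟩
        have hle' : toColex (ρ.erase (c (k+1))) ≤
            toColex ((τ ∪ tailF c (k+1) i).erase (c (k+1))) := by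
          rw [← Finset.sdiff_singleton_eq_erase, ← Finset.sdiff_singleton_eq_erase]
          exact (toColex_sdiff_le_toColex_sdiff (Finset.singleton_subset_iff.2 hxρ)
            (Finset.singleton_subset_iff.2 hxσ)).2 hle
        have herase : (τ ∪ tailF c (k+1) i).erase (c (k+1)) = τ ∪ tailF c k i := by
          rw [tailF_succ hik', Finset.erase_union_distrib,
            Finset.erase_insert (top_notMem_tailF hg hti),
            Finset.erase_eq_self.2 (top_notMem_tau hg hti hik hτsub)]
        have hgood' : Good c t k := hg.restrict (by omega) (by omega)
        have hmem' : τ ∪ tailF c k i ∈ segFam c t k e :=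
          mem_segFam.2 ⟨i, hti, hik', τ, hτsub, hτcard, rfl⟩
        have hcard' : (ρ.erase (c (k+1))).card = k - e := by
          rw [Finset.card_erase_of_mem hxρ, hρcard]
          have := hg.1
          omega
        have hρ' := ih t e hgood' he (ρ.erase (c (k+1))) (τ ∪ tailF c k i)
          hmem' hcard' (by rwa [herase] at hle')
        obtain ⟨j, htj, hjk, τ', hτ'sub, hτ'card, hee⟩ := mem_segFam.1 hρ'
        refine mem_segFam.2 ⟨j, htj, by omega, τ', hτ'sub, hτ'card, ?_⟩
        have : ρ = insert (c (k+1)) (ρ.erase (c (k+1))) := (Finset.insert_erase hxρ).symm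
        rw [this, hee, tailF_succ hjk, Finset.union_comm τ' (insert _ _),
          Finset.insert_union, Finset.union_comm]
      · -- ρ avoids the top element, so it lies in the top block
        have hall : ∀ b ∈ τ ∪ tailF c (k+1) i, b ≤ c (k+1) := by
          intro b hb
          rw [Finset.mem_union] at hb
          rcases hb with hb | hb
          · have h1 := hτsub hb
            rw [Finset.mem_range] at h1
            have h2 : c i ≤ c (k+1) := hg.mono i (k+1) hti hik (le_refl _)
            omega
          · obtain ⟨j, hij, hjk, rfl⟩ := mem_tailF.1 hb
            exact hg.mono j (k+1) (by omega) hjk (le_refl _)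
        have hρall := forall_le_mono hle hall
        have htail : tailF c (k+1) (k+1) = ∅ := by simp [tailF]
        refine mem_segFam.2 ⟨k+1, by omega, le_refl _, ρ, ?_, hρcard,
          by rw [htail, Finset.union_empty]⟩
        intro b hb
        rw [Finset.mem_range]
        have h1 := hρall b hb
        have h2 : b ≠ c (k+1) := fun hbe => hxρ (hbe ▸ hb)
        omega

lemma isInitSeg_segFam (hg : Good c t k) (he : e ≤ 1) :
    Finset.Colex.IsInitSeg (segFam c t k e) (k - e) := by
  constructor
  · intro σ hσ
    exact card_mem_segFam hg he (by simpa using hσ)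
  · intro s s' hs hlt
    exact segFam_initseg c k t e hg he s' s hs hlt.2 hlt.1.le

end KKWork

namespace KKWork

variable {c : ℕ → ℕ} {t k e i : ℕ}

lemma erase_image_Ioc (hg : Good c t k) (hti : t ≤ i) {j : ℕ} (hij : i < j) (hjk : j ≤ k) :
    ((Finset.Ioc i k).image c).erase (c j) = ((Finset.Ioc i k).erase j).image c := by
  ext b
  simp only [Finset.mem_erase, Finset.mem_image, Finset.mem_Ioc]
  constructor
  · rintro ⟨hne, l, hl, rfl⟩
    refine ⟨l, ⟨?_, hl⟩, rfl⟩
    intro hlj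
    exact hne (by rw [hlj])
  · rintro ⟨l, ⟨hlj, hl⟩, rfl⟩
    refine ⟨?_, l, hl, rfl⟩
    intro hcc
    -- c l = c j with l ≠ j, both in (i, k] : contradiction with strict monotonicity
    rcases Nat.lt_or_ge l j with h | h
    · exact absurd hcc (Nat.ne_of_lt (hg.mono' l j (by omega) h hjk))
    · have h' : j < l := by omega
      exact absurd hcc (Nat.ne_of_gt (hg.mono' j l (by omega) h' hl.2))

lemma Ioc_erase_split {j : ℕ} (hij : i < j) (hjk : j ≤ k) :
    (Finset.Ioc i k).erase j = Finset.Ioo i j ∪ Finset.Ioc j k := by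
  ext l
  simp only [Finset.mem_erase, Finset.mem_Ioc, Finset.mem_union, Finset.mem_Ioo]
  omega

lemma shadow_segFam (hg : Good c t k) :
    Finset.shadow (segFam c t k 0) = segFam c t k 1 := by
  ext ρ
  rw [Finset.mem_shadow_iff]
  constructor
  · rintro ⟨σ, hσ, x, hxσ, rfl⟩
    obtain ⟨i, hti, hik, τ, hτsub, hτcard, rfl⟩ := mem_segFam.1 hσ
    rw [Nat.sub_zero] at hτcard
    rw [Finset.mem_union] at hxσ
    rcases hxσ with hxτ | hxtail
    · -- erase an element of the free part
      have hxnotail : x ∉ tailF c k i := by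
        intro hmem
        have h1 := hτsub hxτ
        rw [Finset.mem_range] at h1
        exact absurd h1 (not_lt.2 (tailF_lt hg hti x hmem).le)
      refine mem_segFam.2 ⟨i, hti, hik, τ.erase x, ?_, ?_, ?_⟩
      · exact Finset.Subset.trans (Finset.erase_subset x τ) hτsub
      · rw [Finset.card_erase_of_mem hxτ, hτcard]
      · rw [Finset.erase_union_distrib, Finset.erase_eq_self.2 hxnotail]
    · -- erase a tail element c j
      obtain ⟨j, hij, hjk, rfl⟩ := mem_tailF.1 hxtail
      have hτlt : ∀ b ∈ τ, b < c j := by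
        intro b hb
        have h1 := hτsub hb
        rw [Finset.mem_range] at h1
        have h2 : c i < c j := hg.mono' i j hti hij hjk
        omega
      have hdisj : Disjoint τ ((Finset.Ioo i j).image c) := by
        rw [Finset.disjoint_left]
        intro b hbτ hbim
        obtain ⟨l, hl, rfl⟩ := Finset.mem_image.1 hbim
        rw [Finset.mem_Ioo] at hl
        have h1 := hτsub hbτ
        rw [Finset.mem_range] at h1
        have h2 : c i < c l := hg.mono' i l hti hl.1 (by omega)
        omega
      refine mem_segFam.2 ⟨j, by omega, hjk, τ ∪ (Finset.Ioo i j).image c, ?_, ?_, ?_⟩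
      · intro b hb
        rw [Finset.mem_union] at hb
        rw [Finset.mem_range]
        rcases hb with hb | hb
        · exact hτlt b hb
        · obtain ⟨l, hl, rfl⟩ := Finset.mem_image.1 hb
          rw [Finset.mem_Ioo] at hl
          exact hg.mono' l j (by omega) hl.2 hjk
      · rw [Finset.card_union_of_disjoint hdisj, hτcard,
          Finset.card_image_of_injOn, Nat.card_Ioo]
        · omega
        · intro a ha b hb hab
          simp only [Finset.coe_Ioo, Set.mem_Ioo] at ha hb
          by_contra hne
          rcases Nat.lt_or_ge a b with h | h
          · exact absurd hab (Nat.ne_of_lt (hg.mono' a b (by omega) h (by omega)))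
          · have h' : b < a := by omega
            exact absurd hab.symm (Nat.ne_of_lt (hg.mono' b a (by omega) h' (by omega)))
      · have hcjτ : c j ∉ τ := fun hmem => absurd rfl (Nat.ne_of_lt (hτlt _ hmem))
        rw [tailF, Finset.erase_union_distrib, Finset.erase_eq_self.2 hcjτ,
          erase_image_Ioc hg hti hij hjk, Ioc_erase_split hij hjk, Finset.image_union,
          Finset.union_assoc]
        rfl
  · rintro hρ
    obtain ⟨i, hti, hik, τ, hτsub, hτcard, rfl⟩ := mem_segFam.1 hρ
    have h1 : 1 ≤ t := hg.1
    have hci : i ≤ c i := hg.self_le i hti hik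
    have hlt : τ.card < (Finset.range (c i)).card := by
      rw [Finset.card_range, hτcard]
      omega
    have hne : (Finset.range (c i) \ τ).Nonempty := by
      rw [Finset.sdiff_nonempty]
      intro hsub
      exact absurd (Finset.card_le_card hsub) (not_le.2 hlt)
    obtain ⟨x, hx⟩ := hne
    rw [Finset.mem_sdiff] at hx
    have hxtail : x ∉ tailF c k i := by
      intro hmem
      have h2 := hx.1
      rw [Finset.mem_range] at h2
      exact absurd h2 (not_lt.2 (tailF_lt hg hti x hmem).le)
    refine ⟨insert x τ ∪ tailF c k i, ?_, x, ?_, ?_⟩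
    · refine mem_segFam.2 ⟨i, hti, hik, insert x τ, ?_, ?_, rfl⟩
      · exact Finset.insert_subset hx.1 hτsub
      · rw [Finset.card_insert_of_notMem hx.2, hτcard]
        omega
    · exact Finset.mem_union_left _ (Finset.mem_insert_self x τ)
    · rw [Finset.erase_union_distrib, Finset.erase_insert hx.2,
        Finset.erase_eq_self.2 hxtail]

end KKWork

namespace KKWork
open Finset.Colex

variable {c : ℕ → ℕ} {t k e r n : ℕ}

open Classical in
noncomputable def Seg (k r : ℕ) : Finset (Finset ℕ) :=
  if h : ∃ t c, IsCascadeRep k r t c then segFam h.choose_spec.choose h.choose k 0 else ∅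

lemma Seg_zero : Seg k 0 = ∅ := dif_neg no_rep_zero

lemma _root_.IsCascadeRep.sum_eq {k r t : ℕ} {c : ℕ → ℕ} (h : IsCascadeRep k r t c) :
    (segFam c t k 0).card = r := by
  rw [card_segFam h.good (by omega)]
  simp only [Nat.sub_zero]
  exact h.2.2.2.2.symm

lemma isInitSeg_segFam0 {k t : ℕ} {c : ℕ → ℕ} (hg : Good c t k) :
    IsInitSeg (segFam c t k 0) k := by
  have := isInitSeg_segFam hg (by omega : (0:ℕ) ≤ 1)
  simpa using this

lemma initSeg_subset {𝒜 ℬ : Finset (Finset ℕ)} {m : ℕ} (h1 : IsInitSeg 𝒜 m)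
    (h2 : IsInitSeg ℬ m) (hc : 𝒜.card ≤ ℬ.card) : 𝒜 ⊆ ℬ := by
  rcases h1.total h2 with h | h
  · exact h
  · rw [Finset.eq_of_subset_of_card_le h hc]

lemma segFam_eq_Seg {c : ℕ → ℕ} (hk : 1 ≤ k) (hrep : IsCascadeRep k r t c) :
    segFam c t k 0 = Seg k r := by
  have hex : ∃ t c, IsCascadeRep k r t c := ⟨t, c, hrep⟩
  have hrep' := hex.choose_spec.choose_spec
  rw [Seg, dif_pos hex]
  have h1 := isInitSeg_segFam0 hrep.good
  have h2 := isInitSeg_segFam0 hrep'.good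
  have hc1 := hrep.sum_eq
  have hc2 := hrep'.sum_eq
  exact Finset.Subset.antisymm (initSeg_subset h1 h2 (by omega)) (initSeg_subset h2 h1 (by omega))

lemma card_Seg (hk : 1 ≤ k) (r : ℕ) : (Seg k r).card = r := by
  rcases Nat.eq_zero_or_pos r with rfl | hr
  · rw [Seg_zero]; rfl
  · obtain ⟨t, c, hrep⟩ := cascade_exists hk hr
    rw [← segFam_eq_Seg hk hrep]
    exact hrep.sum_eq

lemma sized_Seg (hk : 1 ≤ k) {σ : Finset ℕ} (hσ : σ ∈ Seg k r) : σ.card = k := by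
  rcases Nat.eq_zero_or_pos r with rfl | hr
  · rw [Seg_zero] at hσ; simp at hσ
  · obtain ⟨t, c, hrep⟩ := cascade_exists hk hr
    rw [← segFam_eq_Seg hk hrep] at hσ
    have := card_mem_segFam hrep.good (by omega : (0:ℕ) ≤ 1) hσ
    simpa using this

lemma isInitSeg_Seg (hk : 1 ≤ k) (r : ℕ) : IsInitSeg (Seg k r) k := by
  rcases Nat.eq_zero_or_pos r with rfl | hr
  · rw [Seg_zero]; exact isInitSeg_empty
  · obtain ⟨t, c, hrep⟩ := cascade_exists hk hr
    rw [← segFam_eq_Seg hk hrep]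
    exact isInitSeg_segFam0 hrep.good

lemma partialShadow_eq (hk : 1 ≤ k) (r : ℕ) :
    partialShadow k r = (Finset.shadow (Seg k r)).card := by
  rcases Nat.eq_zero_or_pos r with rfl | hr
  · rw [Seg_zero, Finset.shadow_empty, Finset.card_empty]
    rw [partialShadow, cascadeVal]
    convert Nat.sInf_empty
    rw [Set.eq_empty_iff_forall_notMem]
    rintro s ⟨t, c, hrep, _⟩
    exact no_rep_zero ⟨t, c, hrep⟩
  · rw [partialShadow, cascadeVal]
    have key : ∀ s, (∃ t c, IsCascadeRep k r t c ∧
        s = ∑ i ∈ Finset.Icc t k, (c i).choose (i - 1)) ↔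
        s = (Finset.shadow (Seg k r)).card := by
      intro s
      constructor
      · rintro ⟨t, c, hrep, rfl⟩
        rw [← segFam_eq_Seg hk hrep, shadow_segFam hrep.good,
          card_segFam hrep.good (le_refl 1)]
      · rintro rfl
        obtain ⟨t, c, hrep⟩ := cascade_exists hk hr
        refine ⟨t, c, hrep, ?_⟩
        rw [← segFam_eq_Seg hk hrep, shadow_segFam hrep.good,
          card_segFam hrep.good (le_refl 1)]
    have hset : {s | ∃ t c, IsCascadeRep k r t c ∧
        s = ∑ i ∈ Finset.Icc t k, (c i).choose (i - 1)} =
        {(Finset.shadow (Seg k r)).card} := by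
      ext s
      rw [Set.mem_singleton_iff]
      exact key s
    rw [hset, csInf_singleton]

lemma Seg_mono (hk : 1 ≤ k) {r r' : ℕ} (h : r ≤ r') : Seg k r ⊆ Seg k r' := by
  refine initSeg_subset (isInitSeg_Seg hk r) (isInitSeg_Seg hk r') ?_
  rw [card_Seg hk, card_Seg hk]
  exact h

lemma partialShadow_mono (hk : 1 ≤ k) {r r' : ℕ} (h : r ≤ r') :
    partialShadow k r ≤ partialShadow k r' := by
  rw [partialShadow_eq hk, partialShadow_eq hk]
  exact Finset.card_le_card (Finset.shadow_mono (Seg_mono hk h))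

lemma isInitSeg_shadow_Seg (hk : 1 ≤ k) (r : ℕ) :
    IsInitSeg (Finset.shadow (Seg (k+1) r)) k := by
  rcases Nat.eq_zero_or_pos r with rfl | hr
  · rw [Seg_zero, Finset.shadow_empty]; exact isInitSeg_empty
  · obtain ⟨t, c, hrep⟩ := cascade_exists (by omega : 1 ≤ k+1) hr
    rw [← segFam_eq_Seg (by omega) hrep, shadow_segFam hrep.good]
    have := isInitSeg_segFam hrep.good (le_refl 1)
    simpa using this

lemma shadow_Seg_subset (hk : 1 ≤ k) {r r' : ℕ} (h : partialShadow (k+1) r ≤ r') :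
    Finset.shadow (Seg (k+1) r) ⊆ Seg k r' := by
  refine initSeg_subset (isInitSeg_shadow_Seg hk r) (isInitSeg_Seg hk r') ?_
  rw [← partialShadow_eq (by omega : 1 ≤ k+1), card_Seg hk]
  exact h

lemma Seg_subset_range (hk : 1 ≤ k) (hrn : r ≤ n.choose k) {σ : Finset ℕ}
    (hσ : σ ∈ Seg k r) : σ ⊆ Finset.range n := by
  rcases Nat.eq_zero_or_pos r with rfl | hr
  · rw [Seg_zero] at hσ; simp at hσ
  obtain ⟨t, c, hrep⟩ := cascade_exists hk hr
  rw [← segFam_eq_Seg hk hrep] at hσ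
  obtain ⟨ht1, htk, hmono, hct, hsum⟩ := hrep
  have hg : Good c t k := ⟨ht1, htk, hmono, hct⟩
  obtain ⟨i, hti, hik, τ, hτsub, hτcard, rfl⟩ := mem_segFam.1 hσ
  have hkck : k ≤ c k := hg.self_le k (by omega) (le_refl _)
  intro x hx
  rw [Finset.mem_range]
  rw [Finset.mem_union] at hx
  rcases Nat.eq_or_lt_of_le htk with hteq | htlt
  · -- t = k : single block, i = k, tail empty, x < c k ≤ n
    have hike : i = k := by omega
    have hsum' : r = (c k).choose k := by
      rw [hteq] at hsum
      simpa using hsum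
    have hckn : c k ≤ n := le_of_choose_le hk hkck (by omega)
    rcases hx with hx | hx
    · have h3 := hτsub hx
      rw [Finset.mem_range, hike] at h3
      omega
    · obtain ⟨j, hij, hjk, rfl⟩ := mem_tailF.1 hx
      omega
  · -- t < k : x ≤ c k < n
    have hsum2 : (c t).choose t + (c k).choose k ≤ r := by
      rw [hsum]
      have hsub : ({t, k} : Finset ℕ) ⊆ Finset.Icc t k := by
        intro z hz
        rw [Finset.mem_insert, Finset.mem_singleton] at hz
        rw [Finset.mem_Icc]
        rcases hz with rfl | rfl <;> omega
      calc (c t).choose t + (c k).choose k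
          = ∑ z ∈ ({t, k} : Finset ℕ), (c z).choose z := by
            rw [Finset.sum_pair (by omega : t ≠ k)]
        _ ≤ ∑ z ∈ Finset.Icc t k, (c z).choose z :=
            Finset.sum_le_sum_of_subset hsub
    have hpos : 0 < (c t).choose t := Nat.choose_pos hct
    have hlt : (c k).choose k < n.choose k := by omega
    have hckn : c k < n := by
      by_contra hcon
      push_neg at hcon
      exact absurd (Nat.choose_le_choose k hcon) (not_le.2 hlt)
    have hxck : x ≤ c k := by
      rcases hx with hx | hx
      · have h1 := hτsub hx
        rw [Finset.mem_range] at h1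
        have h2 : c i ≤ c k := hg.mono i k hti hik (le_refl _)
        omega
      · obtain ⟨j, hij, hjk, rfl⟩ := mem_tailF.1 hx
        exact hg.mono j k (by omega) hjk (le_refl _)
    omega

end KKWork

namespace KKWork
open Finset.Colex

lemma range_eq_image_val (n : ℕ) :
    Finset.range n = (Finset.univ : Finset (Fin n)).image Fin.val := by
  ext x
  simp only [Finset.mem_range, Finset.mem_image, Finset.mem_univ, true_and]
  constructor
  · intro h; exact ⟨⟨x, h⟩, rfl⟩
  · rintro ⟨y, rfl⟩; exact y.isLt

lemma shadow_image {α β : Type*} [LinearOrder α] [LinearOrder β] [DecidableEq α]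
    [DecidableEq β] {f : α → β} (hf : Function.Injective f) (𝒜 : Finset (Finset α)) :
    Finset.shadow (𝒜.image (Finset.image f)) = (Finset.shadow 𝒜).image (Finset.image f) := by
  ext ρ
  constructor
  · intro hρ
    rw [Finset.mem_shadow_iff] at hρ
    obtain ⟨σ', hσ', y, hy, rfl⟩ := hρ
    obtain ⟨σ, hσ, rfl⟩ := Finset.mem_image.1 hσ'
    obtain ⟨x, hx, rfl⟩ := Finset.mem_image.1 hy
    rw [← Finset.image_erase hf]
    exact Finset.mem_image_of_mem _ (Finset.erase_mem_shadow hσ hx)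
  · intro hρ
    obtain ⟨ρ', hρ', rfl⟩ := Finset.mem_image.1 hρ
    rw [Finset.mem_shadow_iff] at hρ'
    obtain ⟨σ, hσ, x, hx, rfl⟩ := hρ'
    rw [Finset.mem_shadow_iff]
    exact ⟨σ.image f, Finset.mem_image_of_mem _ hσ, f x, Finset.mem_image_of_mem f hx,
      (Finset.image_erase hf σ x).symm⟩

lemma transfer_exists {n k : ℕ} (𝒜 : Finset (Finset ℕ)) (hA : ∀ σ ∈ 𝒜, σ.card = k)
    (hsub : ∀ σ ∈ 𝒜, σ ⊆ Finset.range n) [DecidablePred (· ∈ 𝒜)] :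
    ((Finset.powersetCard k (Finset.univ : Finset (Fin n))).filter
        (fun s => s.image Fin.val ∈ 𝒜)).image (Finset.image Fin.val) = 𝒜 := by
  ext σ
  simp only [Finset.mem_image, Finset.mem_filter, Finset.mem_powersetCard]
  constructor
  · rintro ⟨s, ⟨_, hs⟩, rfl⟩
    exact hs
  · intro hσ
    have h1 : σ ⊆ (Finset.univ : Finset (Fin n)).image Fin.val := by
      rw [← range_eq_image_val]
      exact hsub σ hσ
    obtain ⟨s, hs, rfl⟩ := Finset.subset_image_iff.1 h1
    refine ⟨s, ⟨⟨hs, ?_⟩, hσ⟩, rfl⟩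
    have := hA _ hσ
    rwa [Finset.card_image_of_injective s Fin.val_injective] at this

attribute [-instance] instDecidableEqFin in
lemma numericKK {k : ℕ} (hk : 1 ≤ k) (𝒜 : Finset (Finset ℕ))
    (hA : ∀ σ ∈ 𝒜, σ.card = k) :
    partialShadow k 𝒜.card ≤ (Finset.shadow 𝒜).card := by
  classical
  set n := (𝒜.sup fun σ => σ.sup id) + 1 with hn
  have hsub : ∀ σ ∈ 𝒜, σ ⊆ Finset.range n := by
    intro σ hσ x hx
    rw [Finset.mem_range]
    have h1 : x ≤ σ.sup id := Finset.le_sup (f := id) hx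
    have h2 : σ.sup id ≤ 𝒜.sup fun σ => σ.sup id := Finset.le_sup hσ
    omega
  have hr : 𝒜.card ≤ n.choose k := by
    have h1 : 𝒜 ⊆ Finset.powersetCard k (Finset.range n) := by
      intro σ hσ
      rw [Finset.mem_powersetCard]
      exact ⟨hsub σ hσ, hA σ hσ⟩
    have h2 := Finset.card_le_card h1
    rwa [Finset.card_powersetCard, Finset.card_range] at h2
  clear_value n
  set A0 := (Finset.powersetCard k (Finset.univ : Finset (Fin n))).filter
      (fun s => s.image Fin.val ∈ 𝒜) with hA0
  set C0 := (Finset.powersetCard k (Finset.univ : Finset (Fin n))).filter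
      (fun s => s.image Fin.val ∈ Seg k 𝒜.card) with hC0
  have hupA : A0.image (Finset.image Fin.val) = 𝒜 := transfer_exists 𝒜 hA hsub
  have hupC : C0.image (Finset.image Fin.val) = Seg k 𝒜.card :=
    transfer_exists _ (fun σ hσ => sized_Seg hk hσ)
      (fun σ hσ => Seg_subset_range hk hr hσ)
  have hinj : Function.Injective (Finset.image (Fin.val : Fin n → ℕ)) :=
    Finset.image_injective Fin.val_injective
  have hcardA : A0.card = 𝒜.card := by
    rw [← hupA, Finset.card_image_of_injective _ hinj]
  have hcardC : C0.card = 𝒜.card := by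
    have h1 : (C0.image (Finset.image Fin.val)).card = C0.card :=
      Finset.card_image_of_injective _ hinj
    rw [hupC, card_Seg hk] at h1
    omega
  have hsizedA : Set.Sized k (A0 : Set (Finset (Fin n))) := by
    intro s hs
    rw [Finset.mem_coe, hA0, Finset.mem_filter, Finset.mem_powersetCard] at hs
    exact hs.1.2
  have hinitC : IsInitSeg C0 k := by
    constructor
    · intro s hs
      rw [Finset.mem_coe, hC0, Finset.mem_filter, Finset.mem_powersetCard] at hs
      exact hs.1.2
    · rintro s s' hs ⟨hlt, hcard⟩
      rw [hC0, Finset.mem_filter, Finset.mem_powersetCard] at hs ⊢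
      refine ⟨⟨Finset.subset_univ _, hcard⟩, ?_⟩
      have hlt' : toColex (s'.image Fin.val) <
          toColex (s.image Fin.val) :=
        (toColex_image_lt_toColex_image Fin.val_strictMono).2 hlt
      refine (isInitSeg_Seg hk 𝒜.card).2 hs.2 ⟨hlt', ?_⟩
      rw [Finset.card_image_of_injective _ Fin.val_injective]
      exact hcard
  have hKK : (Finset.shadow C0).card ≤ (Finset.shadow A0).card :=
    Finset.kruskal_katona hsizedA (le_of_eq (hcardC.trans hcardA.symm)) hinitC
  have hshadA : (Finset.shadow 𝒜).card = (Finset.shadow A0).card := by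
    rw [← hupA, shadow_image Fin.val_injective, Finset.card_image_of_injective _ hinj]
  have hshadC : (Finset.shadow (Seg k 𝒜.card)).card = (Finset.shadow C0).card := by
    rw [← hupC, shadow_image Fin.val_injective, Finset.card_image_of_injective _ hinj]
  rw [partialShadow_eq hk, hshadC, hshadA]
  exact hKK

end KKWork

namespace KKWork

open Classical in
noncomputable def layer (Δ : Set (Finset ℕ)) (n j : ℕ) : Finset (Finset ℕ) :=
  (Finset.powersetCard j (Finset.Icc 1 n)).filter (· ∈ Δ)

lemma faceCount_eq_layer {n : ℕ} {Δ : Set (Finset ℕ)} (hΔ : SimplicialOn n Δ) (j : ℕ) :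
    faceCount Δ j = (layer Δ n j).card := by
  classical
  rw [faceCount, ← Set.ncard_coe_finset]
  congr 1
  ext σ
  simp only [Set.mem_setOf_eq, Finset.coe_filter, layer, Finset.mem_powersetCard]
  constructor
  · rintro ⟨h1, h2⟩
    exact ⟨⟨hΔ.1 σ h1, h2⟩, h1⟩
  · rintro ⟨⟨h1, h2⟩, h3⟩
    exact ⟨h3, h2⟩

lemma layer_sized {n j : ℕ} {Δ : Set (Finset ℕ)} :
    ∀ σ ∈ layer Δ n j, σ.card = j := by
  intro σ hσ
  classical
  rw [layer, Finset.mem_filter, Finset.mem_powersetCard] at hσ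
  exact hσ.1.2

lemma shadow_layer_subset {n j : ℕ} {Δ : Set (Finset ℕ)} (hΔ : SimplicialOn n Δ) :
    Finset.shadow (layer Δ n j) ⊆ layer Δ n (j-1) := by
  classical
  intro τ hτ
  rw [Finset.mem_shadow_iff] at hτ
  obtain ⟨σ, hσ, x, hx, rfl⟩ := hτ
  rw [layer, Finset.mem_filter, Finset.mem_powersetCard] at hσ ⊢
  refine ⟨⟨Finset.Subset.trans (Finset.erase_subset x σ) hσ.1.1, ?_⟩, ?_⟩
  · rw [Finset.card_erase_of_mem hx, hσ.1.2]
  · exact hΔ.2 σ hσ.2 _ (Finset.erase_subset x σ)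

lemma forward_dir (d : ℕ) (hd : 1 ≤ d) (f : ℕ → ℕ) (n : ℕ)
    (a b : ℕ → ℕ) (had : a (d - 1) = f (d - 1)) (hbd : b (d - 1) = 0)
    (hab : ∀ k, 1 ≤ k → k ≤ d - 1 →
      a (k - 1) = max (partialShadow (k + 1) (a k)) (f (k - 1) + partialShadow (k + 1) (b k)) ∧
      b (k - 1) = max (partialShadow (k + 1) (b k)) (partialShadow (k + 1) (a k) - f (k - 1)))
    (Δ Γ : Set (Finset ℕ)) (hΔ : SimplicialOn n Δ) (hΓ : SimplicialOn n Γ)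
    (hcount : ∀ k < d, faceCount Δ (k + 1) = f k + faceCount Γ (k + 1)) :
    a 0 ≤ n := by
  classical
  have key : ∀ m, m ≤ d - 1 →
      a (d - 1 - m) ≤ faceCount Δ (d - 1 - m + 1) ∧
      b (d - 1 - m) ≤ faceCount Γ (d - 1 - m + 1) := by
    intro m
    induction m with
    | zero =>
      intro _
      simp only [Nat.sub_zero]
      constructor
      · rw [had, hcount (d-1) (by omega)]
        omega
      · rw [hbd]
        omega
    | succ m ih =>
      intro hm
      obtain ⟨iha, ihb⟩ := ih (by omega)
      set k := d - 1 - m with hk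
      have hk1 : 1 ≤ k := by omega
      have hkd : k ≤ d - 1 := by omega
      have hidx : d - 1 - (m + 1) = k - 1 := by omega
      rw [hidx]
      -- Kruskal-Katona bounds for the two complexes
      have hKKΔ : partialShadow (k+1) (faceCount Δ (k+1)) ≤ faceCount Δ k := by
        rw [faceCount_eq_layer hΔ (k+1), faceCount_eq_layer hΔ k]
        calc partialShadow (k+1) (layer Δ n (k+1)).card
            ≤ (Finset.shadow (layer Δ n (k+1))).card :=
              numericKK (by omega) _ layer_sized
          _ ≤ (layer Δ n k).card := by
              have h := Finset.card_le_card (shadow_layer_subset (j := k+1) hΔ)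
              simpa using h
      have hKKΓ : partialShadow (k+1) (faceCount Γ (k+1)) ≤ faceCount Γ k := by
        rw [faceCount_eq_layer hΓ (k+1), faceCount_eq_layer hΓ k]
        calc partialShadow (k+1) (layer Γ n (k+1)).card
            ≤ (Finset.shadow (layer Γ n (k+1))).card :=
              numericKK (by omega) _ layer_sized
          _ ≤ (layer Γ n k).card := by
              have h := Finset.card_le_card (shadow_layer_subset (j := k+1) hΓ)
              simpa using h
      have hSa : partialShadow (k+1) (a k) ≤ faceCount Δ k :=
        le_trans (partialShadow_mono (by omega) iha) hKKΔ
      have hSb : partialShadow (k+1) (b k) ≤ faceCount Γ k :=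
        le_trans (partialShadow_mono (by omega) ihb) hKKΓ
      have hδγ : faceCount Δ k = f (k-1) + faceCount Γ k := by
        have := hcount (k-1) (by omega)
        have he : k - 1 + 1 = k := by omega
        rwa [he] at this
      obtain ⟨hA, hB⟩ := hab k hk1 hkd
      constructor
      · rw [hA]
        have he : k - 1 + 1 = k := by omega
        rw [he]
        omega
      · rw [hB]
        have he : k - 1 + 1 = k := by omega
        rw [he]
        omega
  have h0 := (key (d-1) (le_refl _)).1
  rw [Nat.sub_self] at h0
  rw [Nat.zero_add] at h0
  have hδ0 : faceCount Δ 1 ≤ n := by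
    rw [faceCount_eq_layer hΔ 1]
    have h1 : layer Δ n 1 ⊆ Finset.powersetCard 1 (Finset.Icc 1 n) :=
      Finset.filter_subset _ _
    have h2 := Finset.card_le_card h1
    rwa [Finset.card_powersetCard, Nat.card_Icc, Nat.add_sub_cancel,
      Nat.choose_one_right] at h2
  omega

end KKWork

namespace KKWork

def liftF (σ : Finset ℕ) : Finset ℕ := σ.image (· + 1)

lemma succ_inj : Function.Injective (fun x : ℕ => x + 1) := fun x y h => by
  have h' : x + 1 = y + 1 := h
  omega



lemma liftF_card (σ : Finset ℕ) : (liftF σ).card = σ.card :=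
  Finset.card_image_of_injective _ succ_inj

lemma liftF_inj : Function.Injective liftF := fun s t h =>
  Finset.image_injective succ_inj h

lemma shadow_iterate_mono (m : ℕ) {A B : Finset (Finset ℕ)} (h : A ⊆ B) :
    Finset.shadow^[m] A ⊆ Finset.shadow^[m] B := by
  induction m generalizing A B with
  | zero => simpa using h
  | succ m ih =>
    rw [Function.iterate_succ_apply, Function.iterate_succ_apply]
    exact ih (Finset.shadow_mono h)

lemma seg_chain (d : ℕ) (g : ℕ → ℕ)
    (hstep : ∀ k, 1 ≤ k → k ≤ d - 1 → partialShadow (k+1) (g k) ≤ g (k-1)) :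
    ∀ i k j, k - j = i → j ≤ k → k ≤ d - 1 →
      Finset.shadow^[k-j] (Seg (k+1) (g k)) ⊆ Seg (j+1) (g j) := by
  intro i
  induction i with
  | zero =>
    intro k j hij hjk hkd
    have hjke : j = k := by omega
    subst hjke
    rw [Nat.sub_self]
    exact subset_refl _
  | succ i ih =>
    intro k j hij hjk hkd
    obtain ⟨k', rfl⟩ : ∃ k', k = k' + 1 := ⟨k - 1, by omega⟩
    have h1 : Finset.shadow (Seg (k'+1+1) (g (k'+1))) ⊆ Seg (k'+1) (g k') := by
      have h2 := hstep (k'+1) (by omega) (by omega)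
      rw [Nat.add_sub_cancel] at h2
      exact shadow_Seg_subset (by omega) h2
    have he : k' + 1 - j = (k' - j) + 1 := by omega
    rw [he, Function.iterate_succ_apply]
    exact Finset.Subset.trans (shadow_iterate_mono (k'-j) h1)
      (ih k' j (by omega) (by omega) (by omega))

lemma subset_mem_Seg (d : ℕ) (g : ℕ → ℕ)
    (hstep : ∀ k, 1 ≤ k → k ≤ d - 1 → partialShadow (k+1) (g k) ≤ g (k-1))
    {k j : ℕ} (hkd : k ≤ d - 1) (hjk : j ≤ k)
    {σ τ : Finset ℕ} (hσ : σ ∈ Seg (k+1) (g k)) (hτ : τ ⊆ σ) (hcard : τ.card = j + 1) :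
    τ ∈ Seg (j+1) (g j) := by
  have hσcard : σ.card = k + 1 := sized_Seg (by omega) hσ
  have h1 : τ ∈ Finset.shadow^[k - j] (Seg (k+1) (g k)) := by
    rw [Finset.mem_shadow_iterate_iff_exists_sdiff]
    refine ⟨σ, hσ, hτ, ?_⟩
    rw [Finset.card_sdiff_of_subset hτ, hσcard, hcard]
    omega
  exact seg_chain d g hstep (k-j) k j rfl hjk hkd h1

lemma Seg_elem_lt (d : ℕ) (g : ℕ → ℕ) {n : ℕ}
    (hstep : ∀ k, 1 ≤ k → k ≤ d - 1 → partialShadow (k+1) (g k) ≤ g (k-1))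
    (h0n : g 0 ≤ n) {k : ℕ} (hkd : k ≤ d - 1)
    {σ : Finset ℕ} (hσ : σ ∈ Seg (k+1) (g k)) : σ ⊆ Finset.range n := by
  intro x hx
  have h1 : ({x} : Finset ℕ) ∈ Seg 1 (g 0) :=
    subset_mem_Seg d g hstep hkd (Nat.zero_le k) hσ
      (Finset.singleton_subset_iff.2 hx) (Finset.card_singleton x)
  have h2 := Seg_subset_range (n := n) (le_refl 1)
    (by rw [Nat.choose_one_right]; exact h0n) h1
  exact h2 (Finset.mem_singleton_self x)

def SegCx (d : ℕ) (g : ℕ → ℕ) : Set (Finset ℕ) :=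
  {σ | σ = ∅ ∨ ∃ k, k < d ∧ ∃ σ₀ ∈ Seg (k+1) (g k), σ = liftF σ₀}

lemma SegCx_simplicial (d : ℕ) (hd : 1 ≤ d) (g : ℕ → ℕ) {n : ℕ}
    (hstep : ∀ k, 1 ≤ k → k ≤ d - 1 → partialShadow (k+1) (g k) ≤ g (k-1))
    (h0n : g 0 ≤ n) : SimplicialOn n (SegCx d g) := by
  constructor
  · rintro σ (rfl | ⟨k, hkd, σ₀, hσ₀, rfl⟩)
    · exact Finset.empty_subset _
    · intro x hx
      obtain ⟨y, hy, rfl⟩ := Finset.mem_image.1 hx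
      have h1 := Seg_elem_lt d g hstep h0n (by omega) hσ₀ hy
      rw [Finset.mem_range] at h1
      rw [Finset.mem_Icc]
      omega
  · rintro σ (rfl | ⟨k, hkd, σ₀, hσ₀, rfl⟩) τ hτ
    · rw [Finset.subset_empty] at hτ
      exact Or.inl hτ
    · obtain ⟨τ₀, hτ₀sub, rfl⟩ := Finset.subset_image_iff.1 hτ
      rcases Finset.eq_empty_or_nonempty τ₀ with rfl | hne
      · exact Or.inl (by simp [liftF])
      · have hcard : 1 ≤ τ₀.card := Finset.card_pos.2 hne
        have hσcard : σ₀.card = k + 1 := sized_Seg (by omega) hσ₀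
        have hle : τ₀.card ≤ k + 1 := hσcard ▸ Finset.card_le_card hτ₀sub
        set j := τ₀.card - 1 with hj
        have hcard' : τ₀.card = j + 1 := by omega
        have hjk : j ≤ k := by omega
        refine Or.inr ⟨j, by omega, τ₀, ?_, rfl⟩
        exact subset_mem_Seg d g hstep (by omega) hjk hσ₀ hτ₀sub hcard'

lemma SegCx_count (d : ℕ) (hd : 1 ≤ d) (g : ℕ → ℕ) {k : ℕ} (hkd : k < d) :
    faceCount (SegCx d g) (k + 1) = g k := by
  classical
  have hset : {σ ∈ SegCx d g | σ.card = k + 1} =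
      ((Seg (k+1) (g k)).image liftF : Finset (Finset ℕ)) := by
    ext σ
    simp only [Set.mem_setOf_eq, Finset.coe_image, Set.mem_image, Finset.mem_coe]
    constructor
    · rintro ⟨(rfl | ⟨m, hmd, σ₀, hσ₀, rfl⟩), hcard⟩
      · simp at hcard
      · have h1 : σ₀.card = m + 1 := sized_Seg (by omega) hσ₀
        have h2 : (liftF σ₀).card = m + 1 := by rw [liftF_card, h1]
        have hm : m = k := by omega
        subst hm
        exact ⟨σ₀, hσ₀, rfl⟩
    · rintro ⟨σ₀, hσ₀, rfl⟩
      refine ⟨Or.inr ⟨k, hkd, σ₀, hσ₀, rfl⟩, ?_⟩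
      rw [liftF_card]
      exact sized_Seg (by omega) hσ₀
  rw [faceCount, hset, Set.ncard_coe_finset,
    Finset.card_image_of_injective _ liftF_inj, card_Seg (by omega)]

lemma SegCx_count_high (d : ℕ) (hd : 1 ≤ d) (g : ℕ → ℕ) {k : ℕ} (hkd : d ≤ k) :
    faceCount (SegCx d g) (k + 1) = 0 := by
  have hset : {σ ∈ SegCx d g | σ.card = k + 1} = (∅ : Set (Finset ℕ)) := by
    rw [Set.eq_empty_iff_forall_notMem]
    rintro σ ⟨(rfl | ⟨m, hmd, σ₀, hσ₀, rfl⟩), hcard⟩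
    · simp at hcard
    · have h1 : σ₀.card = m + 1 := sized_Seg (by omega) hσ₀
      have h2 : (liftF σ₀).card = m + 1 := by rw [liftF_card, h1]
      omega
  rw [faceCount, hset, Set.ncard_empty]

end KKWork

namespace KKWork

lemma backward_dir (d : ℕ) (hd : 1 ≤ d) (f : ℕ → ℕ) (n : ℕ)
    (a b : ℕ → ℕ) (had : a (d - 1) = f (d - 1)) (hbd : b (d - 1) = 0)
    (hab : ∀ k, 1 ≤ k → k ≤ d - 1 →
      a (k - 1) = max (partialShadow (k + 1) (a k)) (f (k - 1) + partialShadow (k + 1) (b k)) ∧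
      b (k - 1) = max (partialShadow (k + 1) (b k)) (partialShadow (k + 1) (a k) - f (k - 1)))
    (h0 : a 0 ≤ n) :
    ∃ Δ Γ : Set (Finset ℕ), SimplicialOn n Δ ∧ SimplicialOn n Γ ∧ Γ ⊆ Δ ∧
      ((∅ : Finset ℕ) ∈ Δ → (∅ : Finset ℕ) ∈ Γ) ∧
      (∀ k < d, faceCount Δ (k + 1) = f k + faceCount Γ (k + 1)) ∧
      (∀ k, d ≤ k → faceCount Δ (k + 1) = faceCount Γ (k + 1)) := by
  have hstepa : ∀ k, 1 ≤ k → k ≤ d - 1 → partialShadow (k+1) (a k) ≤ a (k-1) := by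
    intro k h1 h2; rw [(hab k h1 h2).1]; exact le_max_left _ _
  have hstepb : ∀ k, 1 ≤ k → k ≤ d - 1 → partialShadow (k+1) (b k) ≤ b (k-1) := by
    intro k h1 h2; rw [(hab k h1 h2).2]; exact le_max_left _ _
  have abf : ∀ m, m ≤ d - 1 →
      b (d-1-m) ≤ a (d-1-m) ∧ a (d-1-m) = f (d-1-m) + b (d-1-m) := by
    intro m
    induction m with
    | zero => intro _; simp only [Nat.sub_zero]; omega
    | succ m ih =>
      intro hm
      obtain ⟨ih1, ih2⟩ := ih (by omega)
      set k := d - 1 - m with hk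
      have hk1 : 1 ≤ k := by omega
      have hkd : k ≤ d - 1 := by omega
      have hidx : d - 1 - (m+1) = k - 1 := by omega
      rw [hidx]
      obtain ⟨hA, hB⟩ := hab k hk1 hkd
      have hxy : partialShadow (k+1) (b k) ≤ partialShadow (k+1) (a k) :=
        partialShadow_mono (by omega) ih1
      rw [hA, hB]
      omega
  have ab_all : ∀ k, k ≤ d - 1 → b k ≤ a k ∧ a k = f k + b k := by
    intro k hk
    have h := abf (d-1-k) (by omega)
    rwa [show d-1-(d-1-k) = k by omega] at h
  have hb0 : b 0 ≤ n := le_trans (ab_all 0 (by omega)).1 h0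
  refine ⟨SegCx d a, SegCx d b, SegCx_simplicial d hd a hstepa h0,
    SegCx_simplicial d hd b hstepb hb0, ?_, fun _ => Or.inl rfl, ?_, ?_⟩
  · rintro σ (rfl | ⟨k, hkd, σ₀, hσ₀, rfl⟩)
    · exact Or.inl rfl
    · refine Or.inr ⟨k, hkd, σ₀, ?_, rfl⟩
      exact Seg_mono (by omega) (ab_all k (by omega)).1 hσ₀
  · intro k hkd
    rw [SegCx_count d hd a hkd, SegCx_count d hd b hkd]
    exact (ab_all k (by omega)).2
  · intro k hkd
    rw [SegCx_count_high d hd a hkd, SegCx_count_high d hd b hkd]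

end KKWork


/-- characterization of `f`-vectors of proper relative simplicial
complexes on the ground set `[n]` (Theorem 1.2 of the paper). -/
theorem statement3 (d : ℕ) (hd : 1 ≤ d) (f : ℕ → ℕ) (n : ℕ) (hn : 1 ≤ n)
    (a b : ℕ → ℕ) (had : a (d - 1) = f (d - 1)) (hbd : b (d - 1) = 0)
    (hab : ∀ k, 1 ≤ k → k ≤ d - 1 →
      a (k - 1) = max (partialShadow (k + 1) (a k)) (f (k - 1) + partialShadow (k + 1) (b k)) ∧
      b (k - 1) = max (partialShadow (k + 1) (b k)) (partialShadow (k + 1) (a k) - f (k - 1))) :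
    (∃ Δ Γ : Set (Finset ℕ), SimplicialOn n Δ ∧ SimplicialOn n Γ ∧ Γ ⊆ Δ ∧
      ((∅ : Finset ℕ) ∈ Δ → (∅ : Finset ℕ) ∈ Γ) ∧
      (∀ k < d, faceCount Δ (k + 1) = f k + faceCount Γ (k + 1)) ∧
      (∀ k, d ≤ k → faceCount Δ (k + 1) = faceCount Γ (k + 1))) ↔ a 0 ≤ n := by
  constructor
  · rintro ⟨Δ, Γ, hΔ, hΓ, hsub, hempty, hcount, hcount'⟩
    exact KKWork.forward_dir d hd f n a b had hbd hab Δ Γ hΔ hΓ hcount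
  · intro h0
    exact KKWork.backward_dir d hd f n a b had hbd hab h0
end

section
/- Let (f_k)_{k ≥ −1} be an M-sequence, i.e., a sequence of nonnegative integers with f_{−1} = 1 and f_{k−1} ≥ ∂̃_{k+1}(f_k) for all k ≥ 1, and let n ≥ f_0. Then there exists a unique compressed multicomplex Δ̃ on ground set [n] with f_k(Δ̃) = f_k for all k ≥ −1. -/
open Finset

-- ## Auxiliary development

/-- rank of a weakly decreasing list of positive integers among such lists of
the same length, in reverse-lex order -/
def drank : List ℕ → ℕ
  | [] => 0
  | a :: rest => (a + rest.length - 1).choose (rest.length + 1) + drank rest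

abbrev Desc (l : List ℕ) : Prop := List.Pairwise (fun x y => y ≤ x) l

abbrev PosL (l : List ℕ) : Prop := ∀ x ∈ l, 1 ≤ x

theorem drank_nil : drank [] = 0 := rfl
theorem drank_cons (a : ℕ) (rest : List ℕ) :
    drank (a :: rest) = (a + rest.length - 1).choose (rest.length + 1) + drank rest := rfl

/-- L2 : upper bound for drank of a list with entries ≤ a -/
theorem drank_lt_choose {l : List ℕ} {a : ℕ} (hd : Desc l) (hp : PosL l)
    (hb : ∀ x ∈ l, x ≤ a) (ha : 1 ≤ a) :
    drank l < (a + l.length - 1).choose l.length := by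
  induction l with
  | nil => simp [drank]
  | cons b rest ih =>
    obtain ⟨hda, hd⟩ := List.pairwise_cons.mp hd
    have hb1 : 1 ≤ b := hp b (by simp)
    have hba : b ≤ a := hb b (by simp)
    have ihr : drank rest < (a + rest.length - 1).choose rest.length :=
      ih hd (fun x hx => hp x (by simp [hx])) (fun x hx => hb x (by simp [hx]))
    have hmono : (b + rest.length - 1).choose (rest.length + 1) ≤
        (a + rest.length - 1).choose (rest.length + 1) :=
      Nat.choose_le_choose _ (by omega)
    have hpas : (a + (b :: rest).length - 1).choose (b :: rest).length
        = (a + rest.length - 1).choose rest.length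
          + (a + rest.length - 1).choose (rest.length + 1) := by
      have h1 : a + (b :: rest).length - 1 = (a + rest.length - 1) + 1 := by
        simp only [List.length_cons]; omega
      rw [h1, List.length_cons, Nat.choose_succ_succ]
    rw [drank_cons, hpas]
    omega

/-- L1 : drank is strictly monotone w.r.t. lex order on reversed-sorted lists -/
theorem drank_lt_of_lex {l l' : List ℕ} (h : List.Lex (· < ·) l l')
    (hd : Desc l) (hd' : Desc l') (hp : PosL l) (hp' : PosL l')
    (hlen : l.length = l'.length) : drank l < drank l' := by
  induction h with
  | nil => simp at hlen
  | @cons a l1 l2 h ih =>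
    obtain ⟨hda, hd⟩ := List.pairwise_cons.mp hd
    obtain ⟨hda', hd'⟩ := List.pairwise_cons.mp hd'
    have hlen' : l1.length = l2.length := by simpa using hlen
    have := ih hd hd' (fun x hx => hp x (by simp [hx]))
      (fun x hx => hp' x (by simp [hx])) hlen'
    rw [drank_cons, drank_cons, hlen']
    omega
  | @rel a l1 b l2 hab =>
    obtain ⟨hda, hd⟩ := List.pairwise_cons.mp hd
    obtain ⟨hda', hd'⟩ := List.pairwise_cons.mp hd'
    have hlen' : l1.length = l2.length := by simpa using hlen
    have ha1 : 1 ≤ a := hp a (by simp)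
    have hbound : drank l1 < (a + l1.length - 1).choose l1.length :=
      drank_lt_choose hd (fun x hx => hp x (by simp [hx])) hda ha1
    have hpas : (a + l1.length).choose (l1.length + 1)
        = (a + l1.length - 1).choose l1.length
          + (a + l1.length - 1).choose (l1.length + 1) := by
      set x := a + l1.length - 1 with hx
      have h1 : a + l1.length = x + 1 := by omega
      rw [h1, Nat.choose_succ_succ]
    have hmono : (a + l1.length).choose (l1.length + 1) ≤
        (b + l1.length - 1).choose (l1.length + 1) :=
      Nat.choose_le_choose _ (by omega)
    have hge : drank (b :: l2)
        = (b + l1.length - 1).choose (l1.length + 1) + drank l2 := by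
      rw [drank_cons, hlen']
    rw [drank_cons]
    omega

/-- L5 : any cascade representation is "greedy": r < C(c k + 1, k). -/
theorem rep_lt : ∀ k t r (c : ℕ → ℕ), IsCascadeRep k r t c → r < (c k + 1).choose k := by
  intro k
  induction k with
  | zero => intro t r c ⟨h1, h2, _⟩; omega
  | succ k ih =>
    intro t r c ⟨h1, h2, h3, h4, h5⟩
    have hsplit : r = (∑ i ∈ Finset.Icc t k, (c i).choose i) + (c (k+1)).choose (k+1) := by
      rw [h5, Finset.sum_Icc_succ_top h2]
    have hck1 : k + 1 ≤ c (k + 1) := by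
      rcases Nat.eq_or_lt_of_le h2 with h | h
      · rw [h] at h4; omega
      · have ht : t ≤ k := by omega
        have : c k < c (k + 1) := h3 k ht (by omega)
        -- need c t ≤ c k along the chain
        have hchain : ∀ j, t ≤ j → j ≤ k → t + (j - t) ≤ c j := by
          intro j hj1 hj2
          induction j with
          | zero => omega
          | succ j ihj =>
            rcases Nat.eq_or_lt_of_le hj1 with h' | h'
            · rw [← h']; omega
            · have := ihj (by omega) (by omega)
              have := h3 j (by omega) (by omega)
              omega
        have := hchain k (by omega) le_rfl
        omega
    have hpas : (c (k+1) + 1).choose (k+1)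
        = (c (k+1)).choose k + (c (k+1)).choose (k+1) := Nat.choose_succ_succ _ _
    rcases Nat.eq_or_lt_of_le h2 with h | h
    · -- t = k+1 : single term
      have : Finset.Icc t k = ∅ := by
        apply Finset.Icc_eq_empty; omega
      rw [this, Finset.sum_empty] at hsplit
      have hpos : 0 < (c (k+1)).choose k := Nat.choose_pos (by omega)
      omega
    · have ht : t ≤ k := by omega
      have hrep' : IsCascadeRep k (∑ i ∈ Finset.Icc t k, (c i).choose i) t c :=
        ⟨h1, ht, fun i hi1 hi2 => h3 i hi1 (by omega), h4, rfl⟩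
      have ihr := ih t _ c hrep'
      have hmono : (c k + 1).choose k ≤ (c (k+1)).choose k := by
        apply Nat.choose_le_choose
        have := h3 k ht (by omega)
        omega
      omega

theorem sub_le_choose : ∀ m k : ℕ, m - k ≤ m.choose (k + 1) := by
  intro m k
  induction m with
  | zero => simp
  | succ m ih =>
    have hp : (m + 1).choose (k + 1) = m.choose k + m.choose (k + 1) :=
      Nat.choose_succ_succ m k
    rcases Nat.lt_or_ge m k with h | h
    · have : m.choose k = 0 := Nat.choose_eq_zero_of_lt h
      omega
    · have : 0 < m.choose k := Nat.choose_pos h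
      omega

/-- L6 : every r ≥ 1 has a cascade representation at every level k ≥ 1. -/
theorem rep_exists : ∀ k r : ℕ, 1 ≤ k → 1 ≤ r → ∃ t c, IsCascadeRep k r t c := by
  intro k
  induction k with
  | zero => omega
  | succ k ih =>
    intro r _ hr
    rcases Nat.eq_zero_or_pos k with hk0 | hkpos
    · -- k+1 = 1 : r = C(r,1)
      subst hk0
      exact ⟨1, fun _ => r, le_rfl, le_rfl, fun i h1 h2 => by omega, hr, by
        simp [Nat.choose_one_right]⟩
    · -- greedy choice of top coefficient
      set P : ℕ → Prop := fun m => m.choose (k + 1) ≤ r with hP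
      have hPdec : DecidablePred P := fun m => inferInstanceAs (Decidable (_ ≤ _))
      set a := Nat.findGreatest P (r + k + 1) with ha
      have hPk1 : P (k + 1) := by simp [hP, Nat.choose_self, hr]
      have haP : P a := Nat.findGreatest_spec (m := k + 1) (n := r + k + 1) (by omega) hPk1
      have hage : k + 1 ≤ a := Nat.le_findGreatest (n := r + k + 1) (by omega) hPk1
      have hnot : ¬ P (a + 1) := by
        rcases Nat.lt_or_ge (a + 1) (r + k + 2) with h | h
        · exact Nat.findGreatest_is_greatest (n := r + k + 1) (by omega) (by omega)
        · intro hcon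
          have h2 := sub_le_choose (a + 1) k
          simp only [hP] at hcon
          omega
      have hub : r < (a + 1).choose (k + 1) := by
        simp only [hP] at hnot; omega
      have hle : a.choose (k + 1) ≤ r := haP
      rcases Nat.eq_or_lt_of_le hle with heq | hlt
      · -- r = C(a, k+1) : singleton representation
        refine ⟨k + 1, fun _ => a, by omega, le_rfl, fun i h1 h2 => absurd h2 (by omega),
          by simpa using hage, ?_⟩
        rw [Finset.Icc_self, Finset.sum_singleton, heq]
      · -- recurse on r' = r - C(a,k+1)
        set r' := r - a.choose (k + 1) with hr'
        obtain ⟨t, c', ⟨h1, h2, h3, h4, h5⟩⟩ := ih r' hkpos (by omega)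
        have hck : c' k < a := by
          by_contra hcon
          push_neg at hcon
          have hterm : (c' k).choose k ≤ r' := by
            rw [h5]
            exact Finset.single_le_sum (f := fun i => (c' i).choose i)
              (fun i _ => Nat.zero_le _) (Finset.mem_Icc.mpr ⟨h2, le_rfl⟩)
          have hpasc : (a + 1).choose (k + 1) = a.choose k + a.choose (k + 1) :=
            Nat.choose_succ_succ _ _
          have : a.choose k ≤ (c' k).choose k := Nat.choose_le_choose _ hcon
          omega
        refine ⟨t, fun i => if i = k + 1 then a else c' i, h1, by omega, ?_, ?_, ?_⟩
        · intro i hi1 hi2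
          rcases Nat.eq_or_lt_of_le (Nat.succ_le_of_lt hi2) with h | h
          · simp only [show i ≠ k + 1 by omega, if_false, show i + 1 = k + 1 by omega,
              if_pos rfl]
            have : i = k := by omega
            subst this; exact hck
          · simp only [show i ≠ k + 1 by omega, if_false, show i + 1 ≠ k + 1 by omega]
            exact h3 i hi1 (by omega)
        · simp only [show t ≠ k + 1 by omega, if_false]; exact h4
        · rw [Finset.sum_Icc_succ_top (show t ≤ k + 1 by omega)]
          have h6 : ∑ i ∈ Finset.Icc t k,
                ((fun i => if i = k + 1 then a else c' i) i).choose i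
              = ∑ i ∈ Finset.Icc t k, (c' i).choose i := by
            apply Finset.sum_congr rfl
            intro i hi
            have := (Finset.mem_Icc.mp hi).2
            simp [show i ≠ k + 1 by omega]
          have h7 : ((fun i => if i = k + 1 then a else c' i) (k + 1)).choose (k + 1)
              = a.choose (k + 1) := by simp
          rw [h6, h7, ← h5]
          omega

/-- L8 -/
theorem drank_le_head_dropLast : ∀ (l : List ℕ) (b : ℕ), Desc l → (∀ x ∈ l, x ≤ b) →
    drank l ≤ (b + l.length - 2).choose l.length + drank l.dropLast := by
  intro l
  induction l with
  | nil => simp [drank]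
  | cons x t ih =>
    intro b hd hb
    obtain ⟨hdx, hdt⟩ := List.pairwise_cons.mp hd
    have hxb : x ≤ b := hb x (by simp)
    match t with
    | [] =>
      have h1 : drank [x] = x - 1 := by simp [drank, Nat.choose_one_right]
      have h3 : (b + [x].length - 2).choose [x].length = b - 1 := by
        norm_num [Nat.choose_one_right]
        omega
      simp only [List.dropLast_singleton]
      rw [h1, h3]
      simp only [drank]
      omega
    | y :: t' =>
      set m := t'.length with hm
      have e2 : (x :: y :: t').dropLast = x :: (y :: t').dropLast := List.dropLast_cons₂
      have e1 : drank (x :: y :: t')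
          = (x + m).choose (m + 2) + drank (y :: t') := by
        rw [drank_cons]
        congr 2 <;> simp <;> omega
      have e3 : drank (x :: (y :: t').dropLast)
          = (x + m - 1).choose (m + 1) + drank ((y :: t').dropLast) := by
        rw [drank_cons]
        congr 2 <;> simp [hm] <;> omega
      have ihx : drank (y :: t') ≤ (x + m - 1).choose (m + 1) + drank ((y :: t').dropLast) := by
        have := ih x hdt hdx
        have e5 : x + (y :: t').length - 2 = x + m - 1 := by simp; omega
        have e6 : (y :: t').length = m + 1 := by simp [hm]
        rw [e5, e6] at this
        exact this
      have hmono : (x + m).choose (m + 2) ≤ (b + m).choose (m + 2) :=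
        Nat.choose_le_choose _ (by omega)
      have e7 : (b + (x :: y :: t').length - 2).choose ((x :: y :: t').length)
          = (b + m).choose (m + 2) := by
        congr 1 <;> simp <;> omega
      rw [e1, e2, e3, e7]
      omega

/-- L7 : drank of a corank-1 sublist is at most drank of dropLast. -/
theorem drank_sublist_le : ∀ (d e : List ℕ), Desc d → e.Sublist d →
    e.length + 1 = d.length → drank e ≤ drank d.dropLast := by
  intro d
  induction d with
  | nil => intro e _ _ h; simp at h
  | cons a rest ih =>
    intro e hd hsub hlen
    obtain ⟨hda, hdrest⟩ := List.pairwise_cons.mp hd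
    rcases List.sublist_cons_iff.mp hsub with hsub' | ⟨e', rfl, hsub'⟩
    · -- e <+ rest with equal lengths, so e = rest
      have he : e = rest := hsub'.eq_of_length (by simpa using hlen)
      rw [he]
      match rest, hdrest, hda with
      | [], _, _ => simp [drank]
      | y :: t', hdrest, hda =>
        rw [List.dropLast_cons₂]
        have h8 := drank_le_head_dropLast (y :: t') a hdrest hda
        have e3 : drank (a :: (y :: t').dropLast)
            = (a + (y :: t').length - 2).choose ((y :: t').dropLast.length + 1)
              + drank ((y :: t').dropLast) := by
          rw [drank_cons]
          congr 2
          simp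
          omega
        have e4 : (y :: t').dropLast.length + 1 = (y :: t').length := by simp
        rw [e3, e4]
        exact h8
    · -- e = a :: e'
      have hlen' : e'.length + 1 = rest.length := by simpa using hlen
      have hrestne : rest ≠ [] := by
        intro h; rw [h] at hlen'; simp at hlen'
      have e2 : (a :: rest).dropLast = a :: rest.dropLast := by
        match rest, hrestne with
        | y :: t', _ => exact List.dropLast_cons₂
      rw [e2, drank_cons, drank_cons]
      have hhead : (a + e'.length - 1).choose (e'.length + 1)
          = (a + rest.dropLast.length - 1).choose (rest.dropLast.length + 1) := by
        rw [List.length_dropLast]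
        congr 1 <;> omega
      have := ih e' hdrest hsub' hlen'
      omega

/-- L4 : key shadow estimate. -/
theorem shadow_key : ∀ k t r (c : ℕ → ℕ) (l : List ℕ), IsCascadeRep k r t c →
    Desc l → PosL l → l.length = k → drank l < r →
    drank l.dropLast < ∑ i ∈ Finset.Icc t k, (c i - 1).choose (i - 1) := by
  intro k
  induction k with
  | zero => intro t r c l ⟨h1, h2, _⟩; omega
  | succ k ih =>
    intro t r c l ⟨h1, h2, h3, h4, h5⟩ hdl hpl hlen hdr
    match l with
    | a :: rest =>
      obtain ⟨hda, hdrest⟩ := List.pairwise_cons.mp hdl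
      have hrlen : rest.length = k := by simpa using hlen
      have ha1 : 1 ≤ a := hpl a (by simp)
      have hck1 : k + 1 ≤ c (k + 1) := by
        have hchain : ∀ j, t ≤ j → j ≤ k + 1 → t + (j - t) ≤ c j := by
          intro j hj1 hj2
          induction j with
          | zero => omega
          | succ j ihj =>
            rcases Nat.eq_or_lt_of_le hj1 with h' | h'
            · rw [← h']; omega
            · have := ihj (by omega) (by omega)
              have := h3 j (by omega) (by omega)
              omega
        have := hchain (k + 1) (by omega) le_rfl
        omega
      have hhead : drank (a :: rest) = (a + k - 1).choose (k + 1) + drank rest := by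
        rw [drank_cons, hrlen]
      have hSsplit : ∑ i ∈ Finset.Icc t (k + 1), (c i - 1).choose (i - 1)
          = (∑ i ∈ Finset.Icc t k, (c i - 1).choose (i - 1)) + (c (k + 1) - 1).choose k := by
        rw [Finset.sum_Icc_succ_top h2]
        congr 1
      have hrsplit : r = (∑ i ∈ Finset.Icc t k, (c i).choose i) + (c (k + 1)).choose (k + 1) := by
        rw [h5, Finset.sum_Icc_succ_top h2]
      rcases Nat.lt_trichotomy (a + k - 1) (c (k + 1)) with hcmp | hcmp | hcmp
      · -- case a + k - 1 < c (k+1)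
        rcases Nat.eq_zero_or_pos k with hk0 | hkpos
        · -- k = 0 : l = [a], dropLast = []
          subst hk0
          have hre : rest = [] := List.length_eq_zero_iff.mp hrlen
          subst hre
          have hz : drank ([a].dropLast) = 0 := by simp [drank]
          rw [hz, hSsplit]
          have hpos : 0 < (c (0 + 1) - 1).choose 0 := by
            simp
          omega
        · obtain ⟨j, rfl⟩ : ∃ j, k = j + 1 := ⟨k - 1, by omega⟩
          have hrestne : rest ≠ [] := by
            intro h; rw [h] at hrlen; simp at hrlen
          have e2 : (a :: rest).dropLast = a :: rest.dropLast := by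
            match rest, hrestne with
            | y :: t', _ => exact List.dropLast_cons₂
          rw [e2, drank_cons, List.length_dropLast, hrlen]
          simp only [Nat.add_sub_cancel]
          have htail : drank rest.dropLast < (a + j - 1).choose j := by
            have hsub : rest.dropLast.Sublist rest := List.dropLast_sublist rest
            have hh := drank_lt_choose (l := rest.dropLast) (a := a)
              (hdrest.sublist hsub)
              (fun x hx => hpl x (List.mem_cons_of_mem a (hsub.mem hx)))
              (fun x hx => hda x (hsub.mem hx)) ha1
            rwa [List.length_dropLast, hrlen, Nat.add_sub_cancel] at hh
          have hpasc : (a + j).choose (j + 1)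
              = (a + j - 1).choose j + (a + j - 1).choose (j + 1) := by
            set x := a + j - 1 with hx
            have h1 : a + j = x + 1 := by omega
            rw [h1, Nat.choose_succ_succ]
          have hmono : (a + j).choose (j + 1) ≤ (c (j + 1 + 1) - 1).choose (j + 1) :=
            Nat.choose_le_choose _ (by omega)
          rw [hSsplit]
          have hcast : (c (j + 1 + 1) - 1).choose (j + 1 + 1 - 1)
              = (c (j + 1 + 1) - 1).choose (j + 1) := by
            congr 1
          omega
      · -- case a + k - 1 = c (k+1)
        rcases Nat.eq_or_lt_of_le h2 with ht | ht
        · -- t = k+1 : r is a single term, contradiction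
          exfalso
          have hemp : Finset.Icc t k = ∅ := Finset.Icc_eq_empty (by omega)
          rw [hemp, Finset.sum_empty] at hrsplit
          rw [hhead, hcmp] at hdr
          omega
        · -- t ≤ k
          have htk : t ≤ k := by omega
          have hrep' : IsCascadeRep k (∑ i ∈ Finset.Icc t k, (c i).choose i) t c :=
            ⟨h1, htk, fun i hi1 hi2 => h3 i hi1 (by omega), h4, rfl⟩
          have hkpos : 1 ≤ k := by omega
          have hdr' : drank rest < ∑ i ∈ Finset.Icc t k, (c i).choose i := by
            rw [hhead, hcmp] at hdr
            omega
          have ihr := ih t _ c rest hrep' hdrest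
            (fun x hx => hpl x (List.mem_cons_of_mem a hx)) hrlen hdr'
          obtain ⟨j, rfl⟩ : ∃ j, k = j + 1 := ⟨k - 1, by omega⟩
          have hrestne : rest ≠ [] := by
            intro h; rw [h] at hrlen; simp at hrlen
          have e2 : (a :: rest).dropLast = a :: rest.dropLast := by
            match rest, hrestne with
            | y :: t', _ => exact List.dropLast_cons₂
          rw [e2, drank_cons, List.length_dropLast, hrlen]
          simp only [Nat.add_sub_cancel]
          have hterm : (a + j - 1).choose (j + 1) = (c (j + 1 + 1) - 1).choose (j + 1) := by
            congr 1
            omega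
          have hcast : (c (j + 1 + 1) - 1).choose (j + 1 + 1 - 1)
              = (c (j + 1 + 1) - 1).choose (j + 1) := by
            congr 1
          rw [hterm, hSsplit]
          omega
      · -- case a + k - 1 > c (k+1) : contradicts drank l < r
        exfalso
        have hrl := rep_lt (k + 1) t r c ⟨h1, h2, h3, h4, h5⟩
        have hge : (c (k + 1) + 1).choose (k + 1) ≤ (a + k - 1).choose (k + 1) :=
          Nat.choose_le_choose _ (by omega)
        rw [hhead] at hdr
        omega

/-- L3 : surjectivity of drank onto the initial range. -/
theorem exists_drank_eq : ∀ (c n m : ℕ), 1 ≤ n → m < (n + c - 1).choose c →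
    ∃ l : List ℕ, Desc l ∧ (∀ x ∈ l, 1 ≤ x ∧ x ≤ n) ∧ l.length = c ∧ drank l = m := by
  intro c
  induction c with
  | zero =>
    intro n m _ hm
    simp only [Nat.choose_zero_right] at hm
    exact ⟨[], by simp, by simp, rfl, by simp [drank]; omega⟩
  | succ c ih =>
    intro n m hn hm
    have hmb : m < (n + c).choose (c + 1) := by
      have : n + (c + 1) - 1 = n + c := by omega
      rwa [this] at hm
    set A := (Finset.Icc 1 n).filter (fun a => (a + c - 1).choose (c + 1) ≤ m) with hA
    have h1A : 1 ∈ A := by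
      rw [hA, Finset.mem_filter, Finset.mem_Icc]
      refine ⟨⟨le_rfl, hn⟩, ?_⟩
      have : (1 + c - 1).choose (c + 1) = 0 := Nat.choose_eq_zero_of_lt (by omega)
      omega
    have hAne : A.Nonempty := ⟨1, h1A⟩
    set a := A.max' hAne with ha
    have haA : a ∈ A := A.max'_mem hAne
    rw [hA, Finset.mem_filter, Finset.mem_Icc] at haA
    obtain ⟨⟨ha1, han⟩, hle⟩ := haA
    have hub : m < (a + c).choose (c + 1) := by
      rcases Nat.eq_or_lt_of_le han with heq | hlt
      · rw [heq]; exact hmb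
      · by_contra hcon
        push_neg at hcon
        have hmem : a + 1 ∈ A := by
          rw [hA, Finset.mem_filter, Finset.mem_Icc]
          refine ⟨⟨by omega, by omega⟩, ?_⟩
          have : a + 1 + c - 1 = a + c := by omega
          rw [this]
          exact hcon
        have := A.le_max' (a + 1) hmem
        omega
    have hpasc : (a + c).choose (c + 1)
        = (a + c - 1).choose c + (a + c - 1).choose (c + 1) := by
      set x := a + c - 1 with hx
      have h1 : a + c = x + 1 := by omega
      rw [h1, Nat.choose_succ_succ]
    have hm' : m - (a + c - 1).choose (c + 1) < (a + c - 1).choose c := by omega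
    obtain ⟨l', hd', hb', hl', hr'⟩ := ih a (m - (a + c - 1).choose (c + 1)) ha1 hm'
    refine ⟨a :: l', ?_, ?_, ?_, ?_⟩
    · exact List.pairwise_cons.mpr ⟨fun b hb => (hb' b hb).2, hd'⟩
    · intro x hx
      rcases List.mem_cons.mp hx with rfl | hx'
      · exact ⟨ha1, han⟩
      · exact ⟨(hb' x hx').1, le_trans (hb' x hx').2 han⟩
    · simp [hl']
    · rw [drank_cons, hl', hr']
      omega

-- ### multiset glue
def dlist (F : Multiset ℕ) : List ℕ := (Multiset.sort F (· ≤ ·)).reverse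

def mkey (F : Multiset ℕ) : ℕ := drank (dlist F)

theorem dlist_desc (F : Multiset ℕ) : Desc (dlist F) := by
  rw [Desc, dlist, List.pairwise_reverse]
  exact Multiset.pairwise_sort F _

theorem dlist_length (F : Multiset ℕ) : (dlist F).length = Multiset.card F := by
  rw [dlist, List.length_reverse, Multiset.length_sort]

theorem dlist_mem {F : Multiset ℕ} {x : ℕ} : x ∈ dlist F ↔ x ∈ F := by
  rw [dlist, List.mem_reverse, Multiset.mem_sort]

theorem dlist_inj {F G : Multiset ℕ} (h : dlist F = dlist G) : F = G := by
  have := congrArg List.reverse h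
  simp only [dlist, List.reverse_reverse] at this
  have h2 := congrArg (fun l : List ℕ => (↑l : Multiset ℕ)) this
  simpa only [Multiset.sort_eq] using h2

theorem dlist_sublist {F G : Multiset ℕ} (h : G ≤ F) : (dlist G).Sublist (dlist F) := by
  apply List.Sublist.reverse
  apply List.sublist_of_subperm_of_pairwise (r := (· ≤ · : ℕ → ℕ → Prop))
  · rw [← Multiset.coe_le, Multiset.sort_eq, Multiset.sort_eq]
    exact h
  · exact Multiset.pairwise_sort G _
  · exact Multiset.pairwise_sort F _

theorem dlist_coe {l : List ℕ} (hd : Desc l) : dlist (↑l.reverse : Multiset ℕ) = l := by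
  have hsorted : List.Pairwise (· ≤ ·) l.reverse := by
    rw [List.pairwise_reverse]
    exact hd
  have hperm : (Multiset.sort (↑l.reverse : Multiset ℕ) (· ≤ ·)).Perm l.reverse := by
    rw [← Multiset.coe_eq_coe, Multiset.sort_eq]
  have : Multiset.sort (↑l.reverse : Multiset ℕ) (· ≤ ·) = l.reverse :=
    List.Perm.eq_of_pairwise' (Multiset.pairwise_sort _ _) hsorted hperm
  rw [dlist, this, List.reverse_reverse]

theorem lex_trichotomy (l l' : List ℕ) :
    l = l' ∨ List.Lex (· < ·) l l' ∨ List.Lex (· < ·) l' l := by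
  by_cases h1 : List.Lex (· < ·) l l'
  · exact Or.inr (Or.inl h1)
  by_cases h2 : List.Lex (· < ·) l' l
  · exact Or.inr (Or.inr h2)
  exact Or.inl ((List.Lex.trichotomous (· < · : ℕ → ℕ → Prop)).trichotomous l l' h1 h2)

theorem mkey_inj {n : ℕ} {F G : Multiset ℕ} (hF : ∀ x ∈ F, x ∈ Finset.Icc 1 n)
    (hG : ∀ x ∈ G, x ∈ Finset.Icc 1 n) (hcard : Multiset.card F = Multiset.card G)
    (h : mkey F = mkey G) : F = G := by
  have hlen : (dlist F).length = (dlist G).length := by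
    rw [dlist_length, dlist_length, hcard]
  have hpF : PosL (dlist F) := fun x hx =>
    (Finset.mem_Icc.mp (hF x (dlist_mem.mp hx))).1
  have hpG : PosL (dlist G) := fun x hx =>
    (Finset.mem_Icc.mp (hG x (dlist_mem.mp hx))).1
  rcases lex_trichotomy (dlist F) (dlist G) with he | hl | hl
  · exact dlist_inj he
  · have := drank_lt_of_lex hl (dlist_desc F) (dlist_desc G) hpF hpG hlen
    rw [mkey, mkey] at h; omega
  · have := drank_lt_of_lex hl (dlist_desc G) (dlist_desc F) hpG hpF hlen.symm
    rw [mkey, mkey] at h; omega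

theorem mkey_lt_bound {n c : ℕ} {F : Multiset ℕ} (hF : ∀ x ∈ F, x ∈ Finset.Icc 1 n)
    (hcard : Multiset.card F = c) : mkey F < (n + c - 1).choose c := by
  rcases Nat.eq_zero_or_pos c with hc0 | hcpos
  · subst hc0
    have : F = 0 := Multiset.card_eq_zero.mp hcard
    subst this
    have : dlist 0 = [] := by simp [dlist]
    rw [mkey, this]
    simp [drank]
  · have hne : F ≠ 0 := by
      intro h; rw [h] at hcard; simp at hcard; omega
    obtain ⟨x, hx⟩ := Multiset.exists_mem_of_ne_zero hne
    have hn1 : 1 ≤ n := by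
      have := Finset.mem_Icc.mp (hF x hx)
      omega
    have := drank_lt_choose (l := dlist F) (a := n) (dlist_desc F)
      (fun y hy => (Finset.mem_Icc.mp (hF y (dlist_mem.mp hy))).1)
      (fun y hy => (Finset.mem_Icc.mp (hF y (dlist_mem.mp hy))).2) hn1
    rwa [dlist_length, hcard] at this

theorem mkey_surj {n c m : ℕ} (h : m < (n + c - 1).choose c) :
    ∃ F : Multiset ℕ, (∀ x ∈ F, x ∈ Finset.Icc 1 n) ∧ Multiset.card F = c ∧ mkey F = m := by
  rcases Nat.eq_zero_or_pos c with hc0 | hcpos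
  · subst hc0
    simp only [Nat.choose_zero_right] at h
    refine ⟨0, by simp, by simp, ?_⟩
    have : dlist 0 = [] := by simp [dlist]
    rw [mkey, this]
    simp [drank]
    omega
  · have hn1 : 1 ≤ n := by
      by_contra hcon
      have hn0 : n = 0 := by omega
      subst hn0
      have : (0 + c - 1).choose c = 0 := Nat.choose_eq_zero_of_lt (by omega)
      omega
    obtain ⟨l, hld, hlb, hll, hlr⟩ := exists_drank_eq c n m hn1 h
    refine ⟨(↑l.reverse : Multiset ℕ), ?_, ?_, ?_⟩
    · intro x hx
      have : x ∈ l := by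
        rw [Multiset.mem_coe] at hx
        simpa using hx
      exact Finset.mem_Icc.mpr ⟨(hlb x this).1, (hlb x this).2⟩
    · rw [Multiset.coe_card, List.length_reverse, hll]
    · rw [mkey, dlist_coe hld, hlr]

/-- counting a layer -/
theorem layer_count {n c N : ℕ} (hN : N ≤ (n + c - 1).choose c) :
    Set.ncard {F : Multiset ℕ |
      (∀ x ∈ F, x ∈ Finset.Icc 1 n) ∧ mkey F < N ∧ Multiset.card F = c} = N := by
  set S : Set (Multiset ℕ) :=
    {F | (∀ x ∈ F, x ∈ Finset.Icc 1 n) ∧ mkey F < N ∧ Multiset.card F = c} with hS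
  have hinj : Set.InjOn mkey S := by
    intro F hF G hG h
    exact mkey_inj hF.1 hG.1 (by rw [hF.2.2, hG.2.2]) h
  have himg : mkey '' S = Set.Iio N := by
    apply Set.Subset.antisymm
    · rintro m ⟨F, hF, rfl⟩
      exact hF.2.1
    · intro m hm
      have hm' : m < N := hm
      obtain ⟨F, h1, h2, h3⟩ := mkey_surj (n := n) (c := c) (m := m) (lt_of_lt_of_le hm' hN)
      exact ⟨F, ⟨h1, by omega, h2⟩, h3⟩
  have := Set.ncard_image_of_injOn hinj
  rw [himg] at this
  rw [← this, ← Finset.coe_range, Set.ncard_coe_finset, Finset.card_range]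

-- ### chunk f
theorem mrevlex_iff {F G : Multiset ℕ} :
    MRevLexLT F G ↔ List.Lex (· < ·) (dlist F) (dlist G) := Iff.rfl

theorem mkey_zero : mkey 0 = 0 := by
  have : dlist 0 = [] := by simp [dlist]
  rw [mkey, this]
  rfl

theorem mkey_lt_of_lex {n : ℕ} {F G : Multiset ℕ} (hF : ∀ x ∈ F, x ∈ Finset.Icc 1 n)
    (hG : ∀ x ∈ G, x ∈ Finset.Icc 1 n) (hcard : Multiset.card F = Multiset.card G)
    (h : MRevLexLT F G) : mkey F < mkey G := by
  apply drank_lt_of_lex (mrevlex_iff.mp h) (dlist_desc F) (dlist_desc G)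
  · exact fun x hx => (Finset.mem_Icc.mp (hF x (dlist_mem.mp hx))).1
  · exact fun x hx => (Finset.mem_Icc.mp (hG x (dlist_mem.mp hx))).1
  · rw [dlist_length, dlist_length, hcard]

/-- downward closed finite sets of naturals are initial segments -/
theorem nat_downclosed {T : Set ℕ} (hfin : T.Finite)
    (hdc : ∀ a b : ℕ, a < b → b ∈ T → a ∈ T) : T = Set.Iio T.ncard := by
  rcases T.eq_empty_or_nonempty with rfl | hne
  · rw [Set.ncard_empty]
    ext x
    simp
  · have hFne : hfin.toFinset.Nonempty := by rwa [Set.Finite.toFinset_nonempty]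
    set M0 := hfin.toFinset.max' hFne with hM0
    have hM0T : M0 ∈ T := hfin.mem_toFinset.mp (hfin.toFinset.max'_mem hFne)
    have hTIic : T = Set.Iic M0 := by
      ext x
      constructor
      · intro hx
        exact Finset.le_max' hfin.toFinset x (hfin.mem_toFinset.mpr hx)
      · intro hx
        rcases Nat.eq_or_lt_of_le hx with h | h
        · rwa [h]
        · exact hdc x M0 h hM0T
    rw [hTIic]
    have hnc : (Set.Iic M0).ncard = M0 + 1 := by
      rw [← Finset.coe_Iic, Set.ncard_coe_finset, Nat.card_Iic]
    rw [hnc]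
    ext x
    simp [Nat.lt_succ_iff]

/-- every compressed multicomplex layer is determined by its cardinality -/
theorem layer_unique {n : ℕ} {Δ' : Set (Multiset ℕ)} (hmc : MulticomplexOn n Δ')
    (hcp : IsCompressedMulti n Δ') (c N : ℕ) (hN : N ≤ (n + c - 1).choose c)
    (hcount : Set.ncard {G | G ∈ Δ' ∧ Multiset.card G = c} = N) :
    {G | G ∈ Δ' ∧ Multiset.card G = c}
      = {G : Multiset ℕ | (∀ x ∈ G, x ∈ Finset.Icc 1 n) ∧ mkey G < N ∧ Multiset.card G = c} := by
  set S' : Set (Multiset ℕ) := {G | G ∈ Δ' ∧ Multiset.card G = c} with hS'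
  have hent : ∀ G ∈ S', ∀ x ∈ G, x ∈ Finset.Icc 1 n := fun G hG => hmc.1 G hG.1
  have hbnd : ∀ G ∈ S', mkey G < (n + c - 1).choose c :=
    fun G hG => mkey_lt_bound (hent G hG) hG.2
  have hinj : Set.InjOn mkey S' := fun F hF G hG h =>
    mkey_inj (hent F hF) (hent G hG) (by rw [hF.2, hG.2]) h
  have hTfin : (mkey '' S').Finite := by
    apply Set.Finite.subset (Set.finite_Iio ((n + c - 1).choose c))
    rintro m ⟨G, hG, rfl⟩
    exact hbnd G hG
  have hTN : (mkey '' S').ncard = N := by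
    rw [Set.ncard_image_of_injOn hinj, hcount]
  have hdc : ∀ a b : ℕ, a < b → b ∈ mkey '' S' → a ∈ mkey '' S' := by
    rintro a b hab ⟨G, hG, rfl⟩
    have ha : a < (n + c - 1).choose c := lt_trans hab (hbnd G hG)
    obtain ⟨F, hF1, hF2, hF3⟩ := mkey_surj (n := n) (c := c) ha
    rcases lex_trichotomy (dlist F) (dlist G) with he | hl | hl
    · exfalso
      have : F = G := by
        have := congrArg List.reverse he
        simp only [dlist, List.reverse_reverse] at this
        have h2 := congrArg (fun l : List ℕ => (↑l : Multiset ℕ)) this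
        simpa only [Multiset.sort_eq] using h2
      rw [this] at hF3
      omega
    · have hFmem : F ∈ Δ' := hcp F G hF1 hG.1 (by rw [hF2, hG.2]) (Or.inr hl)
      exact ⟨F, ⟨hFmem, hF2⟩, hF3⟩
    · exfalso
      have := mkey_lt_of_lex (hent G hG) hF1 (by rw [hF2, hG.2]) hl
      omega
  have hT : mkey '' S' = Set.Iio N := by
    have := nat_downclosed hTfin hdc
    rwa [hTN] at this
  apply Set.Subset.antisymm
  · intro G hG
    refine ⟨hent G hG, ?_, hG.2⟩
    have : mkey G ∈ mkey '' S' := ⟨G, hG, rfl⟩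
    rw [hT] at this
    exact this
  · rintro G ⟨hG1, hG2, hG3⟩
    have : mkey G ∈ mkey '' S' := by rw [hT]; exact hG2
    obtain ⟨G', hG', hGG'⟩ := this
    have : G' = G := mkey_inj (hent G' hG') hG1 (by rw [hG'.2, hG3]) hGG'
    rwa [← this]

def levelN (f : ℕ → ℕ) : ℕ → ℕ := fun c => if c = 0 then 1 else f (c - 1)

def mDelta (f : ℕ → ℕ) (n : ℕ) : Set (Multiset ℕ) :=
  {F | (∀ x ∈ F, x ∈ Finset.Icc 1 n) ∧ mkey F < levelN f (Multiset.card F)}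

theorem fbound {f : ℕ → ℕ} {n : ℕ}
    (hM : ∀ k, 1 ≤ k → partialShadowTilde (k + 1) (f k) ≤ f (k - 1)) (hn : f 0 ≤ n) :
    ∀ k, f k ≤ (n + k).choose (k + 1) := by
  intro k
  induction k with
  | zero => simpa [Nat.choose_one_right] using hn
  | succ k ih =>
    by_contra hcon
    push_neg at hcon
    have hf1 : 1 ≤ f (k + 1) := by omega
    have hMk := hM (k + 1) (by omega)
    simp only [Nat.add_sub_cancel] at hMk
    have hne : {s | ∃ t c, IsCascadeRep (k + 1 + 1) (f (k + 1)) t c ∧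
        s = ∑ i ∈ Finset.Icc t (k + 1 + 1), (c i - 1).choose (i - 1)}.Nonempty := by
      obtain ⟨t, c, hrep⟩ := rep_exists (k + 1 + 1) (f (k + 1)) (by omega) hf1
      exact ⟨_, t, c, hrep, rfl⟩
    have hmem := Nat.sInf_mem hne
    obtain ⟨t, c, hrep, hval⟩ := hmem
    have hPST : partialShadowTilde (k + 1 + 1) (f (k + 1))
        = ∑ i ∈ Finset.Icc t (k + 1 + 1), (c i - 1).choose (i - 1) := hval
    clear hval hne
    obtain ⟨h1, h2, h3, h4, h5⟩ := hrep
    have hlt := rep_lt (k + 1 + 1) t (f (k + 1)) c ⟨h1, h2, h3, h4, h5⟩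
    have hnk : (n + (k + 1)).choose (k + 1 + 1) = (n + k + 1).choose (k + 1 + 1) := by
      congr 1
    have htop : n + k + 1 ≤ c (k + 1 + 1) := by
      by_contra hc
      push_neg at hc
      have : (c (k + 1 + 1) + 1).choose (k + 1 + 1) ≤ (n + k + 1).choose (k + 1 + 1) :=
        Nat.choose_le_choose _ (by omega)
      omega
    have hmono : (n + k).choose (k + 1) ≤ (c (k + 1 + 1) - 1).choose (k + 1) :=
      Nat.choose_le_choose _ (by omega)
    rcases Nat.eq_or_lt_of_le h2 with ht | ht
    · -- t = k + 2 : single term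
      have hemp : Finset.Icc t (k + 1) = ∅ := Finset.Icc_eq_empty (by omega)
      have hsum : f (k + 1) = (c (k + 1 + 1)).choose (k + 1 + 1) := by
        rw [h5, Finset.sum_Icc_succ_top h2, hemp, Finset.sum_empty, zero_add]
      have htop2 : n + k + 2 ≤ c (k + 1 + 1) := by
        by_contra hc
        push_neg at hc
        have : (c (k + 1 + 1)).choose (k + 1 + 1) ≤ (n + k + 1).choose (k + 1 + 1) :=
          Nat.choose_le_choose _ (by omega)
        have hnk2 : (n + k + 1).choose (k + 1 + 1) = (n + k + 1).choose (k + 1 + 1) := by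
          congr 1
        omega
      have hsplit : ∑ i ∈ Finset.Icc t (k + 1 + 1), (c i - 1).choose (i - 1)
          = (c (k + 1 + 1) - 1).choose (k + 1) := by
        rw [Finset.sum_Icc_succ_top h2, hemp, Finset.sum_empty, zero_add]
        congr 1
      have hmono2 : (n + k + 1).choose (k + 1) ≤ (c (k + 1 + 1) - 1).choose (k + 1) :=
        Nat.choose_le_choose _ (by omega)
      have hpasc : (n + k + 1).choose (k + 1) = (n + k).choose k + (n + k).choose (k + 1) :=
        Nat.choose_succ_succ _ _
      have hp2 : 0 < (n + k).choose k := Nat.choose_pos (by omega)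
      omega
    · -- t ≤ k + 1
      have htk : t ≤ k + 1 := by omega
      have hsplit : ∑ i ∈ Finset.Icc t (k + 1 + 1), (c i - 1).choose (i - 1)
          = (∑ i ∈ Finset.Icc t (k + 1), (c i - 1).choose (i - 1))
            + (c (k + 1 + 1) - 1).choose (k + 1) := by
        rw [Finset.sum_Icc_succ_top h2]
        congr 1
      have hterm : (c t - 1).choose (t - 1)
          ≤ ∑ i ∈ Finset.Icc t (k + 1), (c i - 1).choose (i - 1) :=
        Finset.single_le_sum (f := fun i => (c i - 1).choose (i - 1))
          (fun i _ => Nat.zero_le _) (Finset.mem_Icc.mpr ⟨le_rfl, htk⟩)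
      have hp1 : 0 < (c t - 1).choose (t - 1) := Nat.choose_pos (by omega)
      omega

theorem mDelta_erase {f : ℕ → ℕ} {n : ℕ}
    (hM : ∀ k, 1 ≤ k → partialShadowTilde (k + 1) (f k) ≤ f (k - 1))
    {F : Multiset ℕ} (hF : F ∈ mDelta f n) {x : ℕ} (hx : x ∈ F) :
    F.erase x ∈ mDelta f n := by
  obtain ⟨hent, hkey⟩ := hF
  have hcard : Multiset.card (F.erase x) = Multiset.card F - 1 := by
    rw [Multiset.card_erase_of_mem hx]
    rfl
  have hFne : F ≠ 0 := fun h => by simp [h] at hx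
  have hcpos : 1 ≤ Multiset.card F := Multiset.card_pos.mpr hFne
  refine ⟨fun y hy => hent y (Multiset.mem_of_mem_erase hy), ?_⟩
  rcases Nat.eq_or_lt_of_le hcpos with hc1 | hc2
  · -- card F = 1 : erase is empty
    have hc0 : Multiset.card (F.erase x) = 0 := by omega
    have he : F.erase x = 0 := Multiset.card_eq_zero.mp hc0
    rw [hc0, he, mkey_zero]
    simp [levelN]
  · -- card F = k + 2
    obtain ⟨k, hk⟩ : ∃ k, Multiset.card F = k + 2 := ⟨Multiset.card F - 2, by omega⟩
    have hkey' : mkey F < f (k + 1) := by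
      rw [hk] at hkey
      simpa [levelN] using hkey
    have hf1 : 1 ≤ f (k + 1) := by omega
    have hMk := hM (k + 1) (by omega)
    simp only [Nat.add_sub_cancel] at hMk
    have hne : {s | ∃ t c, IsCascadeRep (k + 1 + 1) (f (k + 1)) t c ∧
        s = ∑ i ∈ Finset.Icc t (k + 1 + 1), (c i - 1).choose (i - 1)}.Nonempty := by
      obtain ⟨t, c, hrep⟩ := rep_exists (k + 1 + 1) (f (k + 1)) (by omega) hf1
      exact ⟨_, t, c, hrep, rfl⟩
    obtain ⟨t, c, hrep, hval⟩ := Nat.sInf_mem hne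
    have hPST : partialShadowTilde (k + 1 + 1) (f (k + 1))
        = ∑ i ∈ Finset.Icc t (k + 1 + 1), (c i - 1).choose (i - 1) := hval
    clear hval hne
    have hsk := shadow_key (k + 1 + 1) t (f (k + 1)) c (dlist F) hrep (dlist_desc F)
      (fun y hy => (Finset.mem_Icc.mp (hent y (dlist_mem.mp hy))).1)
      (by rw [dlist_length, hk]) hkey'
    have hsub : (dlist (F.erase x)).Sublist (dlist F) :=
      dlist_sublist (Multiset.erase_le x F)
    have hlen : (dlist (F.erase x)).length + 1 = (dlist F).length := by
      rw [dlist_length, dlist_length, hcard]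
      omega
    have hle := drank_sublist_le (dlist F) (dlist (F.erase x)) (dlist_desc F) hsub hlen
    have hfin : mkey (F.erase x) < partialShadowTilde (k + 1 + 1) (f (k + 1)) := by
      rw [hPST, mkey]
      omega
    have hce : Multiset.card (F.erase x) = k + 1 := by omega
    rw [hce, levelN]
    simp only [Nat.succ_ne_zero, if_false, Nat.add_sub_cancel]
    omega

theorem mDelta_closed {f : ℕ → ℕ} {n : ℕ}
    (hM : ∀ k, 1 ≤ k → partialShadowTilde (k + 1) (f k) ≤ f (k - 1)) :
    ∀ (d : ℕ) (F G : Multiset ℕ),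
    Multiset.card F - Multiset.card G = d → G ≤ F → F ∈ mDelta f n → G ∈ mDelta f n := by
  intro d
  induction d with
  | zero =>
    intro F G hd hle hF
    have hcard : Multiset.card G ≤ Multiset.card F := Multiset.card_le_card hle
    have : G = F := Multiset.eq_of_le_of_card_le hle (by omega)
    rwa [this]
  | succ d ih =>
    intro F G hd hle hF
    have hcard : Multiset.card G ≤ Multiset.card F := Multiset.card_le_card hle
    have hsub : F - G ≠ 0 := by
      intro h
      have := congrArg Multiset.card h
      rw [Multiset.card_sub hle] at this
      simp at this
      omega
    obtain ⟨x, hx⟩ := Multiset.exists_mem_of_ne_zero hsub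
    have hxF : x ∈ F := Multiset.mem_of_le (Multiset.sub_le_self F G) hx
    have hGe : G ≤ F.erase x := by
      rw [Multiset.le_iff_count]
      intro a
      have hcnt : Multiset.count a (F - G) = Multiset.count a F - Multiset.count a G :=
        Multiset.count_sub a F G
      have hcle : Multiset.count a G ≤ Multiset.count a F := Multiset.count_le_of_le a hle
      rcases eq_or_ne a x with rfl | hne
      · rw [Multiset.count_erase_self]
        have h1 : 1 ≤ Multiset.count a (F - G) := Multiset.count_pos.mpr hx
        omega
      · rw [Multiset.count_erase_of_ne hne]
        exact hcle
    have hFe : F.erase x ∈ mDelta f n := mDelta_erase hM hF hxF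
    apply ih (F.erase x) G _ hGe hFe
    have hpred : Multiset.card (F.erase x) = Multiset.card F - 1 := by
      rw [Multiset.card_erase_of_mem hxF]
      rfl
    omega

theorem mDelta_multicomplex {f : ℕ → ℕ} {n : ℕ}
    (hM : ∀ k, 1 ≤ k → partialShadowTilde (k + 1) (f k) ≤ f (k - 1)) :
    MulticomplexOn n (mDelta f n) := by
  constructor
  · exact fun F hF => hF.1
  · intro F hF G hle
    exact mDelta_closed hM _ F G rfl hle hF

theorem mDelta_compressed {f : ℕ → ℕ} {n : ℕ} : IsCompressedMulti n (mDelta f n) := by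
  intro F G hFent hG hcard hor
  rcases hor with rfl | hlex
  · exact hG
  · refine ⟨hFent, ?_⟩
    have h1 := mkey_lt_of_lex hFent (hG.1) hcard hlex
    have h2 := hG.2
    rw [hcard]
    omega


theorem levelN_bound {f : ℕ → ℕ} {n : ℕ}
    (hM : ∀ k, 1 ≤ k → partialShadowTilde (k + 1) (f k) ≤ f (k - 1)) (hn : f 0 ≤ n)
    (c : ℕ) : levelN f c ≤ (n + c - 1).choose c := by
  rcases Nat.eq_zero_or_pos c with rfl | hc
  · simp [levelN]
  · obtain ⟨k, rfl⟩ : ∃ k, c = k + 1 := ⟨c - 1, by omega⟩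
    have hfb := fbound hM hn k
    have he : n + (k + 1) - 1 = n + k := by omega
    rw [levelN]
    simp only [Nat.succ_ne_zero, if_false, Nat.add_sub_cancel]
    rw [he]
    exact hfb

theorem mDelta_count {f : ℕ → ℕ} {n : ℕ}
    (hM : ∀ k, 1 ≤ k → partialShadowTilde (k + 1) (f k) ≤ f (k - 1)) (hn : f 0 ≤ n)
    (c : ℕ) : mFaceCount (mDelta f n) c = levelN f c := by
  have hbound : levelN f c ≤ (n + c - 1).choose c := levelN_bound hM hn c
  have hset : {F ∈ mDelta f n | Multiset.card F = c}
      = {F : Multiset ℕ | (∀ x ∈ F, x ∈ Finset.Icc 1 n) ∧ mkey F < levelN f c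
          ∧ Multiset.card F = c} := by
    ext F
    constructor
    · rintro ⟨⟨h1, h2⟩, h3⟩
      exact ⟨h1, by rwa [h3] at h2, h3⟩
    · rintro ⟨h1, h2, h3⟩
      exact ⟨⟨h1, by rwa [h3]⟩, h3⟩
  rw [mFaceCount, hset]
  exact layer_count hbound

/-- for every M-sequence `f` and `n ≥ f_0` there is a unique compressed
multicomplex on `[n]` with `f`-vector `f`. -/
theorem statement6 (f : ℕ → ℕ)
    (hM : ∀ k, 1 ≤ k → partialShadowTilde (k + 1) (f k) ≤ f (k - 1))
    (n : ℕ) (hn : f 0 ≤ n) :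
    ∃! Δ : Set (Multiset ℕ), MulticomplexOn n Δ ∧ IsCompressedMulti n Δ ∧
      mFaceCount Δ 0 = 1 ∧ ∀ k, mFaceCount Δ (k + 1) = f k := by
  refine ⟨mDelta f n, ⟨mDelta_multicomplex hM, mDelta_compressed, ?_, ?_⟩, ?_⟩
  · rw [mDelta_count hM hn 0]
    rfl
  · intro k
    rw [mDelta_count hM hn (k + 1)]
    simp [levelN]
  · rintro Δ' ⟨hmc', hcp', hc0', hck'⟩
    ext F
    have hbound := levelN_bound hM hn (Multiset.card F)
    have hcount' : Set.ncard {G | G ∈ Δ' ∧ Multiset.card G = Multiset.card F}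
        = levelN f (Multiset.card F) := by
      rcases Nat.eq_zero_or_pos (Multiset.card F) with hc0 | hcpos
      · rw [hc0]
        exact hc0'
      · obtain ⟨k, hk⟩ : ∃ k, Multiset.card F = k + 1 := ⟨Multiset.card F - 1, by omega⟩
        rw [hk]
        have := hck' k
        rw [mFaceCount] at this
        rw [this]
        simp [levelN]
    have h1 := layer_unique hmc' hcp' (Multiset.card F) (levelN f (Multiset.card F))
      hbound hcount'
    constructor
    · intro hF
      have hmem : F ∈ {G | G ∈ Δ' ∧ Multiset.card G = Multiset.card F} := ⟨hF, rfl⟩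
      rw [h1] at hmem
      exact ⟨hmem.1, hmem.2.1⟩
    · intro hF
      have hmem : F ∈ {G : Multiset ℕ | (∀ x ∈ G, x ∈ Finset.Icc 1 n)
          ∧ mkey G < levelN f (Multiset.card F) ∧ Multiset.card G = Multiset.card F} :=
        ⟨hF.1, hF.2, rfl⟩
      rw [← h1] at hmem
      exact hmem.1
end

section
/- For every k ≥ 1 the function ∂_k is monotone: for all integers 0 ≤ r ≤ s, one has ∂_k(r) ≤ ∂_k(s). -/
open Finset

section Aux

lemma crGe {k r t : ℕ} {c : ℕ → ℕ} (h : IsCascadeRep k r t c) :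
    ∀ i, t ≤ i → i ≤ k → i ≤ c i := by
  obtain ⟨ht1, htk, hinc, hct, hr⟩ := h
  intro i
  induction i with
  | zero => intro _ _; exact Nat.zero_le _
  | succ j ih =>
    intro hti hik
    rcases Nat.lt_or_ge j t with h1 | h1
    · have he : t = j + 1 := le_antisymm hti h1
      exact he ▸ hct
    · have h2 : c j < c (j + 1) := hinc j h1 (by omega)
      have := ih h1 (by omega)
      omega

lemma crRestrict {m r t : ℕ} {c : ℕ → ℕ} (h : IsCascadeRep (m + 1) r t c) (htm : t ≤ m) :
    IsCascadeRep m (∑ i ∈ Finset.Icc t m, (c i).choose i) t c := by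
  obtain ⟨ht1, _, hinc, hct, _⟩ := h
  exact ⟨ht1, htm, fun i hti hik => hinc i hti (by omega), hct, rfl⟩

lemma crSplit {m t : ℕ} (htm : t ≤ m + 1) (f : ℕ → ℕ) :
    ∑ i ∈ Finset.Icc t (m + 1), f i = (∑ i ∈ Finset.Icc t m, f i) + f (m + 1) :=
  Finset.sum_Icc_succ_top htm f

lemma repB : ∀ k r t (c : ℕ → ℕ), IsCascadeRep k r t c → r < (c k + 1).choose k := by
  intro k
  induction k with
  | zero => intro r t c h; exact absurd h.2.1 (by have := h.1; omega)
  | succ m ih =>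
    intro r t c h
    obtain ⟨ht1, htk, hinc, hct, hr⟩ := h
    have hck : m + 1 ≤ c (m + 1) := crGe ⟨ht1, htk, hinc, hct, hr⟩ (m + 1) htk le_rfl
    have hp : (c (m + 1) + 1).choose (m + 1)
        = (c (m + 1)).choose m + (c (m + 1)).choose (m + 1) :=
      Nat.choose_succ_succ _ _
    rcases eq_or_lt_of_le htk with he | hlt
    · have hpos : 0 < (c (m + 1)).choose m := Nat.choose_pos (by omega)
      rw [hr, he, Finset.Icc_self, Finset.sum_singleton]
      omega
    · have htm : t ≤ m := by omega
      have hr' := ih _ _ _ (crRestrict ⟨ht1, htk, hinc, hct, hr⟩ htm)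
      have hcm : c m + 1 ≤ c (m + 1) := hinc m htm (by omega)
      have h2 : (c m + 1).choose m ≤ (c (m + 1)).choose m := Nat.choose_le_choose _ hcm
      rw [hr, crSplit htk]
      omega

lemma repD : ∀ k r t (c : ℕ → ℕ), IsCascadeRep k r t c →
    (∑ i ∈ Finset.Icc t k, (c i).choose (i - 1)) ≤ (c k + 1).choose (k - 1) := by
  intro k
  induction k with
  | zero => intro r t c h; exact absurd h.2.1 (by have := h.1; omega)
  | succ m ih =>
    intro r t c h
    obtain ⟨ht1, htk, hinc, hct, hr⟩ := h
    rcases eq_or_lt_of_le htk with he | hlt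
    · rw [he, Finset.Icc_self, Finset.sum_singleton]
      simp only [Nat.add_sub_cancel]
      exact Nat.choose_le_choose _ (Nat.le_succ _)
    · have htm : t ≤ m := by omega
      have hin := ih _ _ _ (crRestrict ⟨ht1, htk, hinc, hct, hr⟩ htm)
      have hm1 : 1 ≤ m := by omega
      obtain ⟨j, rfl⟩ : ∃ j, m = j + 1 := ⟨m - 1, by omega⟩
      have hcm : c (j + 1) + 1 ≤ c (j + 1 + 1) := hinc (j + 1) htm (by omega)
      have h2 : (c (j + 1) + 1).choose j ≤ (c (j + 1 + 1)).choose j :=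
        Nat.choose_le_choose _ hcm
      have hp : (c (j + 1 + 1) + 1).choose (j + 1)
          = (c (j + 1 + 1)).choose j + (c (j + 1 + 1)).choose (j + 1) :=
        Nat.choose_succ_succ _ _
      rw [crSplit htk]
      simp only [Nat.add_sub_cancel] at hin hp ⊢
      omega

lemma repA : ∀ k, 1 ≤ k → ∀ r s t u (c d : ℕ → ℕ), IsCascadeRep k r t c →
    IsCascadeRep k s u d → r ≤ s →
    (∑ i ∈ Finset.Icc t k, (c i).choose (i - 1)) ≤
      ∑ i ∈ Finset.Icc u k, (d i).choose (i - 1) := by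
  intro k
  induction k with
  | zero => omega
  | succ m ih =>
    intro _ r s t u c d hc hd hrs
    obtain ⟨ht1, htk, hinc, hct, hr⟩ := hc
    obtain ⟨hu1, huk, hinc', hdu, hs⟩ := hd
    have hdtop : (d (m + 1)).choose m ≤ ∑ i ∈ Finset.Icc u (m + 1), (d i).choose (i - 1) := by
      have hmem : m + 1 ∈ Finset.Icc u (m + 1) := Finset.mem_Icc.2 (by omega)
      have := Finset.single_le_sum (f := fun i => (d i).choose (i - 1))
        (fun i _ => Nat.zero_le _) hmem
      simpa using this
    rcases lt_trichotomy (c (m + 1)) (d (m + 1)) with hlt | heq | hgt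
    · have h1 := repD _ _ _ _ ⟨ht1, htk, hinc, hct, hr⟩
      have h2 : (c (m + 1) + 1).choose m ≤ (d (m + 1)).choose m :=
        Nat.choose_le_choose _ (by omega)
      simp only [Nat.add_sub_cancel] at h1
      omega
    · rcases eq_or_lt_of_le htk with he | hlt2
      · rw [he, Finset.Icc_self, Finset.sum_singleton]
        simp only [Nat.add_sub_cancel]
        rw [heq]
        exact hdtop
      · have htm : t ≤ m := by omega
        have hum : u ≤ m := by
          by_contra hum
          have hue : u = m + 1 := by omega
          have hrpos : 1 ≤ ∑ i ∈ Finset.Icc t m, (c i).choose i := by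
            have hmem : t ∈ Finset.Icc t m := Finset.mem_Icc.2 (by omega)
            have h1 : (c t).choose t ≤ ∑ i ∈ Finset.Icc t m, (c i).choose i := by
              simpa using Finset.single_le_sum (f := fun i => (c i).choose i)
                (fun i _ => Nat.zero_le _) hmem
            have h2 : 0 < (c t).choose t := Nat.choose_pos hct
            omega
          rw [hr, crSplit htk] at hrs
          rw [hs, hue, Finset.Icc_self, Finset.sum_singleton, heq] at hrs
          omega
        have hrs' : (∑ i ∈ Finset.Icc t m, (c i).choose i) ≤
            ∑ i ∈ Finset.Icc u m, (d i).choose i := by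
          rw [hr, crSplit htk, hs, crSplit huk, heq] at hrs
          omega
        have := ih (by omega) _ _ t u c d
          (crRestrict ⟨ht1, htk, hinc, hct, hr⟩ htm)
          (crRestrict ⟨hu1, huk, hinc', hdu, hs⟩ hum) hrs'
        rw [crSplit htk (fun i => (c i).choose (i - 1)),
          crSplit huk (fun i => (d i).choose (i - 1))]
        simp only [Nat.add_sub_cancel]
        rw [heq]
        omega
    · exfalso
      have hb := repB _ _ _ _ ⟨hu1, huk, hinc', hdu, hs⟩
      have h1 : (d (m + 1) + 1).choose (m + 1) ≤ (c (m + 1)).choose (m + 1) :=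
        Nat.choose_le_choose _ (by omega)
      have h2 : (c (m + 1)).choose (m + 1) ≤ r := by
        have hmem : m + 1 ∈ Finset.Icc t (m + 1) := Finset.mem_Icc.2 (by omega)
        have h3 : (c (m + 1)).choose (m + 1) ≤ ∑ i ∈ Finset.Icc t (m + 1), (c i).choose i := by
          simpa using Finset.single_le_sum (f := fun i => (c i).choose i)
            (fun i _ => Nat.zero_le _) hmem
        omega
      omega

lemma chooseLB : ∀ n k : ℕ, 1 ≤ k → n + 1 ≤ (n + k).choose k := by
  intro n k hk
  induction n with
  | zero => simp
  | succ j ih =>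
    obtain ⟨i, rfl⟩ : ∃ i, k = i + 1 := ⟨k - 1, by omega⟩
    have he : j + 1 + (i + 1) = (j + (i + 1)) + 1 := by omega
    rw [he, Nat.choose_succ_succ]
    have hpos : 0 < (j + (i + 1)).choose i := Nat.choose_pos (by omega)
    simp only [Nat.succ_eq_add_one]
    omega

lemma repEx : ∀ k, 1 ≤ k → ∀ r, 1 ≤ r → ∃ t c, IsCascadeRep k r t c := by
  intro k
  induction k with
  | zero => omega
  | succ m ih =>
    intro _ r hr
    set P : ℕ → Prop := fun a => a.choose (m + 1) ≤ r with hP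
    have hPK : P (m + 1) := by simp [hP, hr]
    set a := Nat.findGreatest P (r + m) with ha
    have hK : m + 1 ≤ a := Nat.le_findGreatest (by omega) hPK
    have hPa : a.choose (m + 1) ≤ r := Nat.findGreatest_spec (P := P) (by omega) hPK
    have hgt : r < (a + 1).choose (m + 1) := by
      rcases Nat.lt_or_ge (r + m) (a + 1) with hb | hb
      · have h1 : r + (m + 1) ≤ a + 1 := by omega
        have h2 := chooseLB r (m + 1) (by omega)
        have h3 : (r + (m + 1)).choose (m + 1) ≤ (a + 1).choose (m + 1) :=
          Nat.choose_le_choose _ h1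
        omega
      · have := Nat.findGreatest_is_greatest (P := P) (n := r + m) (k := a + 1)
          (by omega) hb
        simpa [hP] using Nat.lt_of_not_le (by simpa [hP] using this)
    have hp : (a + 1).choose (m + 1) = a.choose m + a.choose (m + 1) :=
      Nat.choose_succ_succ _ _
    rcases Nat.eq_or_lt_of_le hPa with heq | hlt
    · refine ⟨m + 1, fun _ => a, ⟨by omega, le_rfl, by omega, hK, ?_⟩⟩
      rw [Finset.Icc_self, Finset.sum_singleton, heq]
    · -- r' = r - a.choose (m+1) > 0
      set r' := r - a.choose (m + 1) with hr'
      have hr'pos : 1 ≤ r' := by omega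
      have hr'lt : r' < a.choose m := by omega
      have hm1 : 1 ≤ m := by
        by_contra hm
        have hm0 : m = 0 := by omega
        rw [hm0] at hr'lt
        simp at hr'lt
        omega
      obtain ⟨t', c', hc'⟩ := ih hm1 r' hr'pos
      obtain ⟨ht1, htm, hinc, hct, hsum⟩ := hc'
      have hcm : c' m < a := by
        by_contra hge
        have h1 : a.choose m ≤ (c' m).choose m := Nat.choose_le_choose _ (by omega)
        have h2 : (c' m).choose m ≤ r' := by
          have hmem : m ∈ Finset.Icc t' m := Finset.mem_Icc.2 (by omega)
          have h3 : (c' m).choose m ≤ ∑ i ∈ Finset.Icc t' m, (c' i).choose i := by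
            simpa using Finset.single_le_sum (f := fun i => (c' i).choose i)
              (fun i _ => Nat.zero_le _) hmem
          omega
        omega
      refine ⟨t', fun i => if i = m + 1 then a else c' i, ⟨ht1, by omega, ?_, ?_, ?_⟩⟩
      · intro i hti hik
        show (if i = m + 1 then a else c' i) < if i + 1 = m + 1 then a else c' (i + 1)
        rcases Nat.eq_or_lt_of_le (Nat.succ_le_of_lt hik) with he | hlt2
        · rw [if_neg (by omega), if_pos he]
          have hi : i = m := by omega
          rw [hi]
          exact hcm
        · rw [if_neg (by omega), if_neg (by omega)]
          exact hinc i hti (by omega)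
      · show t' ≤ if t' = m + 1 then a else c' t'
        rw [if_neg (by omega)]; exact hct
      · show r = ∑ i ∈ Finset.Icc t' (m + 1), (if i = m + 1 then a else c' i).choose i
        rw [crSplit (by omega), if_pos rfl]
        have hcongr : ∑ i ∈ Finset.Icc t' m,
            (if i = m + 1 then a else c' i).choose i
            = ∑ i ∈ Finset.Icc t' m, (c' i).choose i := by
          apply Finset.sum_congr rfl
          intro i hi
          rw [Finset.mem_Icc] at hi
          rw [if_neg (by omega)]
        rw [hcongr, ← hsum]
        omega

end Aux

/-- the functions `∂_k` are monotone. -/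
theorem statement18 (k : ℕ) (hk : 1 ≤ k) :
    ∀ r s : ℕ, r ≤ s → partialShadow k r ≤ partialShadow k s := by
  intro r s hrs
  unfold partialShadow cascadeVal
  rcases Nat.eq_zero_or_pos r with rfl | hr
  · have hempty : {v | ∃ t c, IsCascadeRep k 0 t c ∧
        v = ∑ i ∈ Finset.Icc t k, (c i).choose (i - 1)} = ∅ := by
      ext v
      simp only [Set.mem_setOf_eq, Set.mem_empty_iff_false, iff_false, not_exists]
      rintro t c ⟨⟨ht1, htk, hinc, hct, hsum⟩, _⟩
      have hmem : t ∈ Finset.Icc t k := Finset.mem_Icc.2 ⟨le_rfl, htk⟩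
      have h1 : (c t).choose t ≤ ∑ i ∈ Finset.Icc t k, (c i).choose i := by
        simpa using Finset.single_le_sum (f := fun i => (c i).choose i)
          (fun i _ => Nat.zero_le _) hmem
      have h2 : 0 < (c t).choose t := Nat.choose_pos hct
      omega
    rw [hempty, Nat.sInf_empty]
    exact Nat.zero_le _
  · have hs : 1 ≤ s := le_trans hr hrs
    obtain ⟨t, c, hc⟩ := repEx k hk r hr
    have hne : {v | ∃ u d, IsCascadeRep k s u d ∧
        v = ∑ i ∈ Finset.Icc u k, (d i).choose (i - 1)}.Nonempty := by
      obtain ⟨u, d, hd⟩ := repEx k hk s hs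
      exact ⟨_, u, d, hd, rfl⟩
    obtain ⟨u, d, hd, hval⟩ := Nat.sInf_mem hne
    have h1 : sInf {v | ∃ t' c', IsCascadeRep k r t' c' ∧
        v = ∑ i ∈ Finset.Icc t' k, (c' i).choose (i - 1)} ≤
        ∑ i ∈ Finset.Icc t k, (c i).choose (i - 1) :=
      Nat.sInf_le ⟨t, c, hc, rfl⟩
    have h2 := repA k hk r s t u c d hc hd hrs
    rw [hval]
    exact le_trans h1 h2
end
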